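/- arXiv:2201.10535 — 13 statements merged into one kernel-verified Lean document; each statement's English description precedes it below -/
import Mathlib

section
/- Let H be a complex Hilbert space, let V : H → H be a bounded isometry (V*V = I), and let f, g ∈ H. Then the rank-one perturbation V + f⊗g is left-invertible if and only if c(V;f,g) ≠ 0, where c(V;f,g) = (‖f‖² − ‖V*f‖²)‖g‖² + |1 + ⟨V*f, g⟩|². -/
open ContinuousLinearMap

/-- The rank-one operator `f ⊗ g : h ↦ ⟨h, g⟩ f` (inner ℂ product linear in the
first argument, i.e. `⟪g, h⟫ • f` in Mathlib's convention). -/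
noncomputable def rankOne {H : Type*} [NormedAddCommGroup H] [InnerProductSpace ℂ H]
    (f g : H) : H →L[ℂ] H :=
  (innerSL ℂ g).smulRight f

/-- **Theorem (left-invertibility of rank-one perturbations of isometries).**
`V + f ⊗ g` is left-invertible iff
`c(V;f,g) = (‖f‖² − ‖V*f‖²) ‖g‖² + |1 + ⟨V*f, g⟩|² ≠ 0`. -/
theorem leftInvertible_rankOne_perturbation_iff
    {H : Type*} [NormedAddCommGroup H] [InnerProductSpace ℂ H] [CompleteSpace H]
    (V : H →L[ℂ] H) (hV : (adjoint V) ∘L V = 1) (f g : H) :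
    (∃ S : H →L[ℂ] H, S ∘L (V + rankOne f g) = 1) ↔
      (‖f‖ ^ 2 - ‖adjoint V f‖ ^ 2) * ‖g‖ ^ 2
        + ‖(1 : ℂ) + (inner ℂ g (adjoint V f) : ℂ)‖ ^ 2 ≠ 0 := by
  have key : ∀ z : H, adjoint V (V z) = z := by
    intro z
    have := ContinuousLinearMap.ext_iff.mp hV z
    simpa using this
  set u : H := adjoint V f with hu
  have hiso : ∀ z : H, ‖V z‖ = ‖z‖ := by
    intro z
    have hinner : (inner ℂ (V z) (V z) : ℂ) = inner ℂ z z := by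
      rw [← ContinuousLinearMap.adjoint_inner_left V z (V z), key]
    have h2 : (‖V z‖ : ℝ) ^ 2 = ‖z‖ ^ 2 := by
      rw [← inner_self_eq_norm_sq (𝕜 := ℂ) (V z),
        ← inner_self_eq_norm_sq (𝕜 := ℂ) z, hinner]
    rw [← Real.sqrt_sq (norm_nonneg (V z)), ← Real.sqrt_sq (norm_nonneg z), h2]
  have hfVu : (inner ℂ f (V u) : ℂ) = inner ℂ u u :=
    (ContinuousLinearMap.adjoint_inner_left V u f).symm
  constructor
  · rintro ⟨S, hS⟩ hc
    have hle : ‖u‖ ≤ ‖f‖ := by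
      have h1 : (‖u‖ : ℝ) ^ 2 ≤ ‖f‖ * ‖V u‖ := by
        calc (‖u‖ : ℝ) ^ 2 = ‖(inner ℂ u u : ℂ)‖ := by
              rw [inner_self_eq_norm_sq_to_K (𝕜 := ℂ) u]
              simp [norm_pow]
          _ = ‖(inner ℂ f (V u) : ℂ)‖ := by rw [hfVu]
          _ ≤ ‖f‖ * ‖V u‖ := norm_inner_le_norm f (V u)
      rw [hiso u] at h1
      rcases eq_or_lt_of_le (norm_nonneg u) with h | h
      · rw [← h]; exact norm_nonneg f
      · nlinarith
    have hterm1 : (0 : ℝ) ≤ (‖f‖ ^ 2 - ‖u‖ ^ 2) * ‖g‖ ^ 2 := by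
      have h : ‖u‖ ^ 2 ≤ ‖f‖ ^ 2 := by nlinarith [norm_nonneg u]
      have := sq_nonneg ‖g‖
      nlinarith
    have hterm2 : (0 : ℝ) ≤ ‖(1 : ℂ) + (inner ℂ g u : ℂ)‖ ^ 2 := by positivity
    have h2 : ‖(1 : ℂ) + (inner ℂ g u : ℂ)‖ ^ 2 = 0 := by linarith
    have h1 : (‖f‖ ^ 2 - ‖u‖ ^ 2) * ‖g‖ ^ 2 = 0 := by linarith
    have hp : (inner ℂ g u : ℂ) = -1 := by
      have h3 : (1 : ℂ) + (inner ℂ g u : ℂ) = 0 := by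
        have := pow_eq_zero_iff (n := 2) (by norm_num) |>.mp h2
        exact norm_eq_zero.mp this
      linear_combination h3
    have hune : u ≠ 0 := by
      intro h
      rw [h] at hp; simp at hp
    have hgne : ‖g‖ ^ 2 ≠ 0 := by
      intro h
      have : g = 0 := by simpa using pow_eq_zero_iff (n := 2) (by norm_num) |>.mp h
      rw [this] at hp; simp at hp
    have hnorm : ‖f‖ ^ 2 = ‖u‖ ^ 2 := by
      rcases mul_eq_zero.mp h1 with h | h
      · linarith
      · exact absurd h hgne
    have hfeq : f = V u := by
      have expand := @norm_sub_sq ℂ _ _ _ _ f (V u)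
      have hre : RCLike.re (inner ℂ f (V u) : ℂ) = ‖u‖ ^ 2 := by
        rw [hfVu]
        exact inner_self_eq_norm_sq (𝕜 := ℂ) u
      rw [hre, hiso u, hnorm] at expand
      have hsub : ‖f - V u‖ ^ 2 = 0 := by linarith
      have h4 := pow_eq_zero_iff (n := 2) (by norm_num) |>.mp hsub
      have h5 := norm_eq_zero.mp h4
      exact sub_eq_zero.mp h5
    have hTu : (V + rankOne f g) u = 0 := by
      simp [rankOne, hp, hfeq]
    have := ContinuousLinearMap.ext_iff.mp hS u
    rw [ContinuousLinearMap.comp_apply, hTu] at this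
    simp at this
    exact hune this.symm
  · intro hc
    set p : ℂ := inner ℂ g u with hp
    set q : ℂ := inner ℂ u g with hq
    set s : ℂ := inner ℂ g g with hs
    set t : ℂ := inner ℂ u u with ht
    set a : ℂ := inner ℂ f f with ha
    set c : ℂ := (1 + p) * (1 + q) + (a - t) * s with hcdef
    have hcc : c ≠ 0 := by
      have hqc : q = starRingEnd ℂ p := by rw [hq, hp, ← inner_conj_symm]
      have h1 : (1 + p) * (1 + q) = ((‖(1 : ℂ) + p‖ ^ 2 : ℝ) : ℂ) := by
        rw [hqc, show (1 : ℂ) + starRingEnd ℂ p = starRingEnd ℂ (1 + p) by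
          rw [map_add, map_one]]
        rw [Complex.mul_conj, Complex.normSq_eq_norm_sq]
      have h2 : a = ((‖f‖ : ℂ)) ^ 2 := inner_self_eq_norm_sq_to_K f
      have h3 : t = ((‖u‖ : ℂ)) ^ 2 := inner_self_eq_norm_sq_to_K u
      have h4 : s = ((‖g‖ : ℂ)) ^ 2 := inner_self_eq_norm_sq_to_K g
      have hceq : c = (((‖f‖ ^ 2 - ‖u‖ ^ 2) * ‖g‖ ^ 2
          + ‖(1 : ℂ) + p‖ ^ 2 : ℝ) : ℂ) := by
        rw [hcdef, h1, h2, h3, h4]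
        push_cast
        ring
      rw [hceq]
      exact_mod_cast hc
    set B : H →L[ℂ] H := 1 - ((1 + q) / c) • rankOne u g - ((1 + p) / c) • rankOne g u
        + ((t - a) / c) • rankOne g g + (s / c) • rankOne u u with hB
    refine ⟨B ∘L (adjoint V + rankOne g f), ?_⟩
    ext x
    have hfVx : (inner ℂ f (V x) : ℂ) = inner ℂ u x :=
      (ContinuousLinearMap.adjoint_inner_left V x f).symm
    simp only [ContinuousLinearMap.comp_apply, ContinuousLinearMap.add_apply,
      ContinuousLinearMap.one_apply, hB, rankOne, ContinuousLinearMap.smulRight_apply,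
      innerSL_apply_apply, map_add, map_smul, key, ContinuousLinearMap.smul_apply,
      ContinuousLinearMap.sub_apply, inner_add_right, inner_smul_right, hfVx]
    rw [← hu, ← hp, ← hq, ← hs, ← ht, ← ha]
    match_scalars <;> field_simp <;> ring
end

section
/- Let H be a complex Hilbert space, let V : H → H be a bounded isometry, and let f, g ∈ H. Then V + f⊗g is NOT left-invertible if and only if ‖V*f‖ = ‖f‖ and ⟨V*f, g⟩ = −1. -/
open ContinuousLinearMap

/-- **Corollary.** For an isometry `V`, the perturbation `V + f ⊗ g` fails to be
left-invertible iff `‖V*f‖ = ‖f‖` and `⟨V*f, g⟩ = -1`. -/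
theorem not_leftInvertible_rankOne_perturbation_iff
    {H : Type*} [NormedAddCommGroup H] [InnerProductSpace ℂ H] [CompleteSpace H]
    (V : H →L[ℂ] H) (hV : (adjoint V) ∘L V = 1) (f g : H) :
    (¬ ∃ S : H →L[ℂ] H, S ∘L (V + rankOne f g) = 1) ↔
      (‖adjoint V f‖ = ‖f‖ ∧ (inner ℂ g (adjoint V f) : ℂ) = -1) := by
  set u : H := adjoint V f with hu
  have hVVx : ∀ x : H, adjoint V (V x) = x := by
    intro x
    have := ContinuousLinearMap.ext_iff.mp hV x
    simpa using this
  have hinnerVV : ∀ x y : H, (inner ℂ (V x) (V y) : ℂ) = inner ℂ x y := by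
    intro x y
    rw [← adjoint_inner_left, hVVx]
  have hfVx : ∀ x : H, (inner ℂ f (V x) : ℂ) = inner ℂ u x := by
    intro x
    rw [hu, adjoint_inner_left]
  constructor
  · -- contrapositive: construct left inverse when conditions fail
    intro hnex
    by_contra hcond
    apply hnex
    by_cases hα : (inner ℂ g u : ℂ) = -1
    · -- then ‖u‖ ≠ ‖f‖; use S = V* - ‖w‖⁻² u⊗w  with w = f - V u
      have hn : ‖u‖ ≠ ‖f‖ := fun h => hcond ⟨h, hα⟩
      set w : H := f - V u with hw
      have hwV : ∀ x : H, (inner ℂ w (V x) : ℂ) = 0 := by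
        intro x
        rw [hw, inner_sub_left, hfVx, hinnerVV, hu, sub_self]
      have hwf : (inner ℂ w f : ℂ) = (‖w‖ : ℂ) ^ 2 := by
        have : (inner ℂ w w : ℂ) = inner ℂ w f := by
          rw [hw]
          nth_rewrite 1 [inner_sub_right]
          rw [← hw, hwV, sub_zero]
        rw [← this, inner_self_eq_norm_sq_to_K]
        norm_cast
      have hw0 : w ≠ 0 := by
        intro h0
        apply hn
        have hfVu : f = V u := by rwa [hw, sub_eq_zero] at h0
        have h1 : (inner ℂ (V u) (V u) : ℂ) = inner ℂ u u := hinnerVV u u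
        rw [← hfVu] at h1
        have h2 := (inner_self_eq_norm_sq_to_K (𝕜 := ℂ) (x := f)).symm.trans
          (h1.trans (inner_self_eq_norm_sq_to_K (𝕜 := ℂ) (x := u)))
        have h3 : ‖f‖ ^ 2 = ‖u‖ ^ 2 := by exact_mod_cast h2
        have := congrArg Real.sqrt h3
        rw [Real.sqrt_sq (norm_nonneg f), Real.sqrt_sq (norm_nonneg u)] at this
        exact this.symm
      have hwn : ((‖w‖ : ℂ) ^ 2) ≠ 0 := by
        simp [norm_eq_zero, hw0]
      refine ⟨adjoint V - ((‖w‖ : ℂ) ^ 2)⁻¹ • rankOne u w, ?_⟩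
      ext x
      simp only [ContinuousLinearMap.comp_apply, ContinuousLinearMap.add_apply,
        ContinuousLinearMap.sub_apply, ContinuousLinearMap.smul_apply,
        ContinuousLinearMap.one_apply, rankOne, smulRight_apply, innerSL_apply_apply]
      rw [map_add, map_smul, hVVx, inner_add_right, inner_smul_right, hwV, hwf]
      rw [← hu]
      have : ((‖w‖ : ℂ) ^ 2)⁻¹ • ((0 + (inner ℂ g x : ℂ) * (‖w‖ : ℂ) ^ 2) • u)
          = (inner ℂ g x : ℂ) • u := by
        rw [zero_add, smul_smul]
        congr 1
        field_simp
        exact mul_div_cancel_left₀ _ (by simpa using hw0)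
      rw [this]
      abel
    · -- S = (1 - (1+α)⁻¹ • u⊗g) ∘ V*
      set α : ℂ := inner ℂ g u with hα'
      have h1α : (1 : ℂ) + α ≠ 0 := by
        intro h
        apply hα
        linear_combination h
      refine ⟨(1 - ((1 : ℂ) + α)⁻¹ • rankOne u g) ∘L adjoint V, ?_⟩
      ext x
      simp only [ContinuousLinearMap.comp_apply, ContinuousLinearMap.add_apply,
        ContinuousLinearMap.sub_apply, ContinuousLinearMap.smul_apply,
        ContinuousLinearMap.one_apply, rankOne, smulRight_apply, innerSL_apply_apply]
      rw [map_add, map_smul, hVVx, ← hu]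
      rw [inner_add_right, inner_smul_right, ← hα']
      rw [smul_smul]
      have hc : ((1 : ℂ) + α)⁻¹ * (inner ℂ g x + inner ℂ g x * α) = inner ℂ g x := by
        field_simp
      rw [hc]
      abel
  · -- conditions imply T u = 0 and u ≠ 0
    rintro ⟨hn, hα⟩ ⟨S, hS⟩
    have hfVu : f = V u := by
      have hfu : (inner ℂ f (V u) : ℂ) = (‖u‖ : ℂ) ^ 2 := by
        rw [hfVx]
        exact_mod_cast inner_self_eq_norm_sq_to_K (𝕜 := ℂ) (x := u)
      have : (inner ℂ (f - V u) (f - V u) : ℂ) = 0 := by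
        rw [inner_sub_left, inner_sub_right, inner_sub_right, hfu, hinnerVV,
          inner_self_eq_norm_sq_to_K, inner_self_eq_norm_sq_to_K]
        have : (inner ℂ (V u) f : ℂ) = (‖u‖ : ℂ) ^ 2 := by
          rw [← inner_conj_symm, hfu]
          simp
        rw [this, hn]
        norm_cast
        exact sub_self _
      rw [inner_self_eq_zero, sub_eq_zero] at this
      exact this
    have hTu : (V + rankOne f g) u = 0 := by
      simp only [ContinuousLinearMap.add_apply, rankOne, smulRight_apply, innerSL_apply_apply]
      rw [hα, hfVu]
      simp
    have hu0 : u ≠ 0 := by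
      intro h
      rw [h] at hα
      simp at hα
    apply hu0
    calc u = (S ∘L (V + rankOne f g)) u := by rw [hS]; simp
    _ = S ((V + rankOne f g) u) := rfl
    _ = 0 := by rw [hTu]; simp
end

section
/- Let H be a complex Hilbert space, let V : H → H be a bounded isometry, and let f, g ∈ H be such that c := c(V;f,g) = (‖f‖² − ‖V*f‖²)‖g‖² + |1 + ⟨V*f,g⟩|² is nonzero. Set R = (1 + ⟨g, V*f⟩) (V*f)⊗g and X = I + (1/c)·( ‖g‖² (V*f)⊗(V*f) + (‖V*f‖² − ‖f‖²) g⊗g − (R + R*) ). Then L = X (V + f⊗g)* is a left inverse of V + f⊗g, i.e., X (V + f⊗g)* (V + f⊗g) = I. -/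
open ContinuousLinearMap

lemma rankOne_apply' {H : Type*} [NormedAddCommGroup H] [InnerProductSpace ℂ H]
    (f g h : H) : rankOne f g h = (inner ℂ g h : ℂ) • f := rfl

lemma adjoint_rankOne' {H : Type*} [NormedAddCommGroup H] [InnerProductSpace ℂ H]
    [CompleteSpace H] (f g : H) : adjoint (rankOne f g) = rankOne g f := by
  symm
  rw [eq_adjoint_iff]
  intro x y
  simp [rankOne_apply', inner_smul_left, inner_smul_right, mul_comm]

set_option maxHeartbeats 1000000 in
/-- **Explicit left inverse.** If `c = c(V;f,g) ≠ 0`, then with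
`R = (1 + ⟨g, V*f⟩) (V*f) ⊗ g` and
`X = I + (1/c)(‖g‖² (V*f)⊗(V*f) + (‖V*f‖² − ‖f‖²) g⊗g − (R + R*))`,
the operator `X (V + f⊗g)*` is a left inverse of `V + f⊗g`. -/
theorem explicit_left_inverse
    {H : Type*} [NormedAddCommGroup H] [InnerProductSpace ℂ H] [CompleteSpace H]
    (V : H →L[ℂ] H) (hV : (adjoint V) ∘L V = 1) (f g : H)
    (c : ℝ)
    (hc : c = (‖f‖ ^ 2 - ‖adjoint V f‖ ^ 2) * ‖g‖ ^ 2
        + ‖(1 : ℂ) + (inner ℂ g (adjoint V f) : ℂ)‖ ^ 2)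
    (hc0 : c ≠ 0)
    (R : H →L[ℂ] H)
    (hR : R = ((1 : ℂ) + (inner ℂ (adjoint V f) g : ℂ)) • rankOne (adjoint V f) g)
    (X : H →L[ℂ] H)
    (hX : X = 1 + ((c : ℂ))⁻¹ •
        (((‖g‖ : ℂ) ^ 2) • rankOne (adjoint V f) (adjoint V f)
          + (((‖adjoint V f‖ ^ 2 - ‖f‖ ^ 2 : ℝ) : ℂ)) • rankOne g g
          - (R + adjoint R))) :
    X ∘L adjoint (V + rankOne f g) ∘L (V + rankOne f g) = 1 := by
  have hVapp : ∀ x : H, adjoint V (V x) = x := fun x => by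
    have := congrArg (fun T => T x) hV; simpa using this
  have hfV : ∀ x : H, (inner ℂ f (V x) : ℂ) = inner ℂ (adjoint V f) x := fun x =>
    (adjoint_inner_left V x f).symm
  have key : ∀ z : ℂ, ((‖z‖ : ℝ) : ℂ)^2 = z * (starRingEnd ℂ) z := fun z => by
    rw [Complex.mul_conj, ← Complex.sq_norm]; push_cast; ring
  have hn : ∀ x : H, ((‖x‖ : ℝ) : ℂ)^2 = inner ℂ x x := fun x =>
    mod_cast (inner_self_eq_norm_sq_to_K (𝕜 := ℂ) x).symm
  have hC : (c : ℂ) = ((inner ℂ f f : ℂ) - (inner ℂ (adjoint V f) (adjoint V f) : ℂ))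
        * (inner ℂ g g : ℂ)
      + (1 + (inner ℂ g (adjoint V f) : ℂ)) * (1 + (inner ℂ (adjoint V f) g : ℂ)) := by
    rw [hc]
    push_cast
    rw [key]
    simp only [map_add, map_one, inner_conj_symm, hn]
  have hC0 : ((inner ℂ f f : ℂ) - (inner ℂ (adjoint V f) (adjoint V f) : ℂ))
        * (inner ℂ g g : ℂ)
      + (1 + (inner ℂ g (adjoint V f) : ℂ)) * (1 + (inner ℂ (adjoint V f) g : ℂ)) ≠ 0 := by
    rw [← hC]
    exact_mod_cast hc0
  ext h
  subst hR hX
  simp only [map_add, map_smul, adjoint.map_smulₛₗ, adjoint_rankOne', map_sub,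
    map_one, inner_conj_symm, starRingEnd_apply, star_add, star_one]
  simp only [comp_apply, add_apply, ContinuousLinearMap.one_apply, smul_apply, sub_apply, rankOne_apply',
    map_add, map_smul, hVapp, inner_add_right, inner_smul_right, hfV,
    ← starRingEnd_apply, inner_conj_symm, smul_add, smul_smul, smul_sub]
  match_scalars
  · norm_num
  all_goals
    simp only [hn, mul_one]
    rw [hC]
    field_simp
    ring
end

section
/- Let H be a complex Hilbert space, let V : H → H be a bounded isometry, and let f, g ∈ H be nonzero vectors. If f does not belong to the range of V, then V + f⊗g is left-invertible. -/
open ContinuousLinearMap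

/-- **Corollary.** If `V` is an isometry, `f, g` are nonzero, and `f` is not in
the range of `V`, then `V + f ⊗ g` is left-invertible. -/
theorem leftInvertible_of_not_mem_range
    {H : Type*} [NormedAddCommGroup H] [InnerProductSpace ℂ H] [CompleteSpace H]
    (V : H →L[ℂ] H) (hV : (adjoint V) ∘L V = 1) (f g : H)
    (hf : f ≠ 0) (hg : g ≠ 0) (hfr : f ∉ Set.range V) :
    ∃ S : H →L[ℂ] H, S ∘L (V + rankOne f g) = 1 := by
  set T : H →L[ℂ] H := V + rankOne f g with hTdef
  -- V preserves norms
  have hVV : ∀ x, adjoint V (V x) = x := fun x =>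
    congrFun (congrArg DFunLike.coe hV) x
  have hVnorm : ∀ x : H, ‖V x‖ = ‖x‖ := by
    intro x
    have h1 : (inner ℂ (V x) (V x) : ℂ) = inner ℂ x x := by
      rw [← ContinuousLinearMap.adjoint_inner_left, hVV]
    rw [inner_self_eq_norm_sq_to_K, inner_self_eq_norm_sq_to_K] at h1
    have h2 : ‖V x‖ ^ 2 = ‖x‖ ^ 2 := by exact_mod_cast h1
    nlinarith [norm_nonneg (V x), norm_nonneg x]
  -- range of V is closed
  set K : Submodule ℂ H := LinearMap.range (V : H →ₗ[ℂ] H) with hKdef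
  have hKclosed : IsClosed (K : Set H) := by
    have hanti : AntilipschitzWith 1 V :=
      V.antilipschitz_of_bound (fun x => by simp [hVnorm x])
    have : IsClosed (Set.range V) := hanti.isClosed_range V.uniformContinuous
    have heq : (K : Set H) = Set.range V := by
      ext y; simp [hKdef, LinearMap.mem_range, Set.mem_range]
    rw [heq]; exact this
  haveI : CompleteSpace K := hKclosed.completeSpace_coe
  -- decompose f = V a + q with q ⊥ K
  obtain ⟨a, ha⟩ : ∃ a, V a = (K.orthogonalProjection f : H) :=
    (K.orthogonalProjection f).2
  set q : H := f - K.orthogonalProjection f with hqdef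
  have hqmem : q ∈ Kᗮ := K.sub_starProjection_mem_orthogonal f
  have hq0 : q ≠ 0 := fun h =>
    hfr ⟨a, by rw [ha]; exact (sub_eq_zero.mp h).symm⟩
  have hfa : f = V a + q := by rw [hqdef, ha]; abel
  have hqpos : (0:ℝ) < ‖q‖ := norm_pos_iff.mpr hq0
  -- key lower bound
  set c : ℝ := ‖q‖ / (‖q‖ + ‖a‖) with hcdef
  have hcpos : 0 < c := div_pos hqpos (by positivity)
  have hbound : ∀ x : H, c * ‖x‖ ≤ ‖T x‖ := by
    intro x
    set t : ℂ := inner ℂ g x with htdef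
    have hTx : T x = V (x + t • a) + t • q := by
      simp only [hTdef, ContinuousLinearMap.add_apply, rankOne,
        ContinuousLinearMap.smulRight_apply, innerSL_apply_apply, map_add, map_smul]
      rw [hfa]; simp [smul_add]; abel
    have horth : (inner ℂ (V (x + t • a)) (t • q) : ℂ) = 0 := by
      rw [inner_smul_right]
      have : (inner ℂ (V (x + t • a)) q : ℂ) = 0 :=
        ((Submodule.mem_orthogonal K q).mp hqmem) _ ⟨x + t • a, rfl⟩
      rw [this, mul_zero]
    have hpyth : ‖T x‖ * ‖T x‖ =
        ‖x + t • a‖ * ‖x + t • a‖ + (‖t‖ * ‖q‖) * (‖t‖ * ‖q‖) := by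
      rw [hTx, norm_add_sq_eq_norm_sq_add_norm_sq_of_inner_eq_zero _ _ horth,
        hVnorm, norm_smul]
    have h1 : ‖x + t • a‖ ≤ ‖T x‖ := by
      nlinarith [norm_nonneg (x + t • a), norm_nonneg (T x), sq_nonneg (‖t‖ * ‖q‖)]
    have h2 : ‖t‖ * ‖q‖ ≤ ‖T x‖ := by
      nlinarith [norm_nonneg (T x), mul_nonneg (norm_nonneg t) (norm_nonneg q),
        sq_nonneg (‖x + t • a‖)]
    have h3 : ‖x‖ ≤ ‖x + t • a‖ + ‖t‖ * ‖a‖ := by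
      calc ‖x‖ = ‖(x + t • a) - t • a‖ := by congr 1; abel
        _ ≤ ‖x + t • a‖ + ‖t • a‖ := norm_sub_le _ _
        _ = ‖x + t • a‖ + ‖t‖ * ‖a‖ := by rw [norm_smul]
    rw [hcdef, div_mul_eq_mul_div, div_le_iff₀ (by positivity)]
    nlinarith [norm_nonneg a, norm_nonneg t, norm_nonneg x]
  -- T is injective with closed range
  have hanti : AntilipschitzWith ⟨c⁻¹, (inv_nonneg.mpr hcpos.le)⟩ T := by
    apply T.antilipschitz_of_bound
    intro x
    have := hbound x
    rw [← le_div_iff₀' hcpos] at this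
    rw [div_eq_inv_mul] at this; exact this
  have hker : LinearMap.ker (T : H →ₗ[ℂ] H) = ⊥ :=
    LinearMap.ker_eq_bot_of_injective hanti.injective
  have hRclosed : IsClosed ((LinearMap.range (T : H →ₗ[ℂ] H) : Submodule ℂ H) : Set H) := by
    have : IsClosed (Set.range T) := hanti.isClosed_range T.uniformContinuous
    have heq : ((LinearMap.range (T : H →ₗ[ℂ] H) : Submodule ℂ H) : Set H) = Set.range T := by
      ext y; simp [LinearMap.mem_range, Set.mem_range]
    rw [heq]; exact this
  haveI : CompleteSpace (LinearMap.range (T : H →ₗ[ℂ] H)) := hRclosed.completeSpace_coe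
  -- build the left inverse
  set R : Submodule ℂ H := LinearMap.range (T : H →ₗ[ℂ] H) with hRdef
  set T' : H →L[ℂ] R := T.codRestrict R (fun x => LinearMap.mem_range_self _ x) with hT'def
  have hker' : LinearMap.ker (T' : H →ₗ[ℂ] R) = ⊥ := by
    apply LinearMap.ker_eq_bot_of_injective
    intro x y hxy
    apply hanti.injective
    have := congrArg (Subtype.val) hxy
    simpa [hT'def] using this
  have hsurj' : LinearMap.range (T' : H →ₗ[ℂ] R) = ⊤ := by
    apply LinearMap.range_eq_top.mpr
    rintro ⟨y, x, hx⟩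
    exact ⟨x, Subtype.ext (by simpa [hT'def] using hx)⟩
  let e : H ≃L[ℂ] R := ContinuousLinearEquiv.ofBijective T' hker' hsurj'
  refine ⟨(e.symm : R →L[ℂ] H) ∘L (R.orthogonalProjection), ?_⟩
  ext x
  simp only [ContinuousLinearMap.comp_apply, ContinuousLinearMap.one_apply,
    ContinuousLinearEquiv.coe_coe]
  have hmem : T x ∈ R := LinearMap.mem_range_self _ x
  have hproj : R.orthogonalProjection (T x) = ⟨T x, hmem⟩ := by
    exact Submodule.orthogonalProjection_mem_subspace_eq_self ⟨T x, hmem⟩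
  rw [hproj]
  have : e x = ⟨T x, hmem⟩ := rfl
  rw [← this, e.symm_apply_apply]
end

section
/- Let H be a complex Hilbert space, let V : H → H be a pure isometry, let f₀ ∈ ker V*, and let m, n be nonnegative integers with m > n + 1. Then for f = Vᵐ f₀ and g = Vⁿ f₀ one has c(V;f,g) = 1, and the operator S = V + f⊗g is both analytic and left-invertible. -/
open ContinuousLinearMap

/-- **Proposition.** If `V` is a pure isometry, `f₀ ∈ ker V*` and `m > n + 1`,
then with `f = Vᵐ f₀` and `g = Vⁿ f₀` one has `c(V;f,g) = 1`, and
`S = V + f ⊗ g` is analytic and left-invertible (a shift). -/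
theorem shift_of_rankOne_perturbation_pure_isometry
    {H : Type*} [NormedAddCommGroup H] [InnerProductSpace ℂ H] [CompleteSpace H]
    (V : H →L[ℂ] H) (hV : (adjoint V) ∘L V = 1)
    (hpure : (⋂ k : ℕ, Set.range ⇑(V ^ k)) = {0})
    (f₀ : H) (hf₀ : adjoint V f₀ = 0) (m n : ℕ) (hmn : n + 1 < m)
    (f g : H) (hf : f = (V ^ m) f₀) (hg : g = (V ^ n) f₀) :
    ((‖f‖ ^ 2 - ‖adjoint V f‖ ^ 2) * ‖g‖ ^ 2
        + ‖(1 : ℂ) + (inner ℂ g (adjoint V f) : ℂ)‖ ^ 2 = 1)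
      ∧ (⋂ k : ℕ, Set.range ⇑((V + rankOne f g) ^ k)) = {0}
      ∧ (∃ S : H →L[ℂ] H, S ∘L (V + rankOne f g) = 1) := by
  have hVV : ∀ x : H, adjoint V (V x) = x := fun x => by
    have := congrArg (fun T : H →L[ℂ] H => T x) hV
    simpa using this
  have hinner : ∀ x y : H, (inner ℂ (V x) (V y) : ℂ) = inner ℂ x y := fun x y => by
    rw [← ContinuousLinearMap.adjoint_inner_left, hVV]
  have Hiso : ∀ (a : ℕ) (x y : H), (inner ℂ ((V ^ a) x) ((V ^ a) y) : ℂ) = inner ℂ x y := by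
    intro a
    induction a with
    | zero => simp
    | succ a ih =>
      intro x y
      simp only [pow_succ', ContinuousLinearMap.mul_apply, hinner]
      exact ih x y
  have hpowsucc : ∀ (k : ℕ) (x : H), (V ^ (k + 1)) x = V ((V ^ k) x) := fun k x => by
    rw [pow_succ', ContinuousLinearMap.mul_apply]
  have Hf0 : ∀ d : ℕ, (inner ℂ f₀ ((V ^ (d + 1)) f₀) : ℂ) = 0 := fun d => by
    rw [hpowsucc, ← ContinuousLinearMap.adjoint_inner_left, hf₀, inner_zero_left]
  have Horth : ∀ a b : ℕ, a < b → (inner ℂ ((V ^ a) f₀) ((V ^ b) f₀) : ℂ) = 0 := by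
    intro a b hab
    obtain ⟨d, rfl⟩ : ∃ d, b = a + (d + 1) := ⟨b - a - 1, by omega⟩
    rw [pow_add, ContinuousLinearMap.mul_apply, Hiso, Hf0]
  have hnormsq : ∀ (k : ℕ) (x : H), ‖(V ^ k) x‖ ^ 2 = ‖x‖ ^ 2 := by
    intro k x
    have h1 := Hiso k x x
    rw [inner_self_eq_norm_sq_to_K, inner_self_eq_norm_sq_to_K] at h1
    exact_mod_cast h1
  obtain ⟨m', rfl⟩ : ∃ m', m = m' + 1 := ⟨m - 1, by omega⟩
  have hnm' : n < m' := by omega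
  set S : H →L[ℂ] H := V + rankOne f g with hSdef
  have hrk : ∀ (u v y : H), rankOne u v y = (inner ℂ v y : ℂ) • u := fun u v y => by
    simp [rankOne]
  have hS : ∀ y : H, S y = V y + (inner ℂ g y : ℂ) • f := fun y => by
    simp [hSdef, hrk]
  have adjVf : adjoint V f = (V ^ m') f₀ := by
    rw [hf, hpowsucc, hVV]
  have hgu : (inner ℂ g ((V ^ m') f₀) : ℂ) = 0 := by
    rw [hg]; exact Horth n m' hnm'
  have hgf : (inner ℂ g f : ℂ) = 0 := by
    rw [hg, hf]; exact Horth n (m' + 1) (by omega)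
  refine ⟨?_, ?_, ?_⟩
  · rw [adjVf, hgu, hf, hnormsq, hnormsq]
    simp
  · -- analyticity
    have B0 : ∀ y : H, (inner ℂ f₀ (S y) : ℂ) = 0 := by
      intro y
      rw [hS, inner_add_right, inner_smul_right, ← ContinuousLinearMap.adjoint_inner_left,
        hf₀, inner_zero_left, hf]
      have h0 : (inner ℂ f₀ ((V ^ (m' + 1)) f₀) : ℂ) = 0 := by
        have := Horth 0 (m' + 1) (by omega)
        simpa using this
      rw [h0]
      ring
    have Bj : ∀ j : ℕ, j + 1 < m' + 1 → ∀ y : H,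
        (inner ℂ ((V ^ (j + 1)) f₀) (S y) : ℂ) = inner ℂ ((V ^ j) f₀) y := by
      intro j hj y
      rw [hS, inner_add_right, inner_smul_right, hf, Horth (j + 1) (m' + 1) hj,
        hpowsucc, hinner]
      ring
    have P : ∀ j : ℕ, j < m' + 1 → ∀ y : H,
        (inner ℂ ((V ^ j) f₀) ((S ^ (j + 1)) y) : ℂ) = 0 := by
      intro j
      induction j with
      | zero =>
        intro _ y
        simpa using B0 y
      | succ j ih =>
        intro hj y
        have hy : (S ^ (j + 1 + 1)) y = S ((S ^ (j + 1)) y) := by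
          rw [pow_succ', ContinuousLinearMap.mul_apply]
        rw [hy, Bj j hj]
        exact ih (by omega) y
    have G : ∀ y : H, (inner ℂ g ((S ^ (n + 1)) y) : ℂ) = 0 := by
      intro y
      rw [hg]
      exact P n (by omega) y
    have F : ∀ (k : ℕ) (y : H), (S ^ (n + 1 + k)) y = (V ^ k) ((S ^ (n + 1)) y) := by
      intro k
      induction k with
      | zero => simp
      | succ k ih =>
        intro y
        have h1 : (S ^ (n + 1 + (k + 1))) y = S ((S ^ (n + 1 + k)) y) := by
          rw [show n + 1 + (k + 1) = (n + 1 + k) + 1 from rfl, pow_succ',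
            ContinuousLinearMap.mul_apply]
        have h2 : (inner ℂ g ((S ^ (n + 1 + k)) y) : ℂ) = 0 := by
          rw [pow_add, ContinuousLinearMap.mul_apply]
          exact G ((S ^ k) y)
        rw [h1, hS, h2, zero_smul, add_zero, ih, ← hpowsucc]
    apply subset_antisymm
    · intro x hx
      have hxV : x ∈ ⋂ k : ℕ, Set.range ⇑(V ^ k) := by
        refine Set.mem_iInter.mpr fun k => ?_
        obtain ⟨y, hy⟩ := Set.mem_iInter.mp hx (n + 1 + k)
        exact ⟨(S ^ (n + 1)) y, by rw [← F k y]; exact hy⟩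
      rw [hpure] at hxV
      exact hxV
    · intro x hx
      simp only [Set.mem_singleton_iff] at hx
      subst hx
      exact Set.mem_iInter.mpr fun k => ⟨0, map_zero _⟩
  · -- left invertibility
    refine ⟨(1 - rankOne ((V ^ m') f₀) g) ∘L adjoint V, ?_⟩
    ext y
    have h1 : adjoint V (S y) = y + (inner ℂ g y : ℂ) • ((V ^ m') f₀) := by
      rw [hS, map_add, map_smul, hVV, adjVf]
    simp only [ContinuousLinearMap.comp_apply, ContinuousLinearMap.one_apply,
      ContinuousLinearMap.sub_apply, ← hSdef, h1, hrk]
    rw [inner_add_right, inner_smul_right, hgu]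
    simp
end

section
/- Let H be a complex Hilbert space, let V : H → H be a pure isometry, and let f, g ∈ H satisfy V*g + ⟨g,f⟩g = 0. Then V + f⊗g is analytic, i.e., ⋂_{n≥0} (V + f⊗g)ⁿ(H) = {0}. -/
open ContinuousLinearMap

/-- **Proposition.** If `V` is a pure isometry and `V*g + ⟨g,f⟩g = 0` (inner
product linear in the first argument, so `⟨g,f⟩ = ⟪f,g⟫` in Mathlib's
convention), then `V + f ⊗ g` is analytic. -/
theorem analytic_of_kernel_condition
    {H : Type*} [NormedAddCommGroup H] [InnerProductSpace ℂ H] [CompleteSpace H]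
    (V : H →L[ℂ] H) (hV : (adjoint V) ∘L V = 1)
    (hpure : (⋂ k : ℕ, Set.range ⇑(V ^ k)) = {0})
    (f g : H) (hfg : adjoint V g + (inner ℂ f g : ℂ) • g = 0) :
    (⋂ k : ℕ, Set.range ⇑((V + rankOne f g) ^ k)) = {0} := by
  set T := V + rankOne f g with hT
  have happ : ∀ h : H, T h = V h + (inner ℂ g h : ℂ) • f := by
    intro h; simp [hT, rankOne]
  have hadj : adjoint V g = -((inner ℂ f g : ℂ) • g) := by
    rw [eq_neg_iff_add_eq_zero]; exact hfg
  have hgT : ∀ h : H, (inner ℂ g (T h) : ℂ) = 0 := by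
    intro h
    have h2 : (inner ℂ g (V h) : ℂ) = inner ℂ (adjoint V g) h :=
      (ContinuousLinearMap.adjoint_inner_left V h g).symm
    rw [happ, inner_add_right, inner_smul_right, h2, hadj, inner_neg_left,
      inner_smul_left, inner_conj_symm]
    ring
  have hTT : ∀ h : H, T (T h) = V (T h) := by
    intro h
    rw [happ (T h), hgT, zero_smul, add_zero]
  have key : ∀ k : ℕ, ∀ y : H, (T ^ (k + 1)) y = (V ^ k) (T y) := by
    intro k
    induction k with
    | zero => intro y; simp
    | succ k ih =>
      intro y
      have e1 : (T ^ (k + 2)) y = (T ^ (k + 1)) (T y) := by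
        rw [pow_succ]; rfl
      rw [e1, ih (T y), hTT, pow_succ]
      rfl
  apply Set.Subset.antisymm
  · intro x hx
    have hx' : x ∈ ⋂ k : ℕ, Set.range ⇑(V ^ k) := by
      rw [Set.mem_iInter] at hx ⊢
      intro k
      obtain ⟨y, hy⟩ := hx (k + 1)
      exact ⟨T y, by rw [← key k y, hy]⟩
    rw [hpure] at hx'
    exact hx'
  · intro x hx
    rw [Set.mem_singleton_iff] at hx
    subst hx
    rw [Set.mem_iInter]
    intro k
    exact ⟨0, map_zero _⟩
end

section
/- Let H be a complex Hilbert space, let V : H → H be a bounded isometry, and let f, g ∈ H satisfy V*g + ⟨g,f⟩g = 0. Set S = V + f⊗g. Then S^{n+1} = Vⁿ S for every n ≥ 1. -/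
open ContinuousLinearMap

lemma rankOne_comp_eq_zero
    {H : Type*} [NormedAddCommGroup H] [InnerProductSpace ℂ H] [CompleteSpace H]
    (V : H →L[ℂ] H)
    (f g : H) (hfg : adjoint V g + (inner ℂ f g : ℂ) • g = 0) :
    rankOne f g ∘L (V + rankOne f g) = 0 := by
  have hAdj : adjoint V g = -((inner ℂ f g : ℂ) • g) := by
    linear_combination (norm := abel) hfg
  ext h
  have h1 : (inner ℂ g (V h) : ℂ) = inner ℂ (adjoint V g) h := by
    rw [adjoint_inner_left]
  simp only [comp_apply, add_apply, rankOne, smulRight_apply, innerSL_apply_apply,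
    innerSL_apply_apply, zero_apply, map_add, inner_add_left, inner_smul_left, h1, hAdj,
    inner_neg_left, inner_smul_right]
  rw [← inner_conj_symm g f, mul_comm]
  simp

/-- **Power identity.** If `V` is an isometry and `V*g + ⟨g,f⟩g = 0` (inner
product linear in the first argument, so `⟨g,f⟩ = ⟪f,g⟫` in Mathlib's
convention), then `S = V + f ⊗ g` satisfies `S^{n+1} = Vⁿ S` for all `n ≥ 1`. -/
theorem power_eq_of_kernel_condition
    {H : Type*} [NormedAddCommGroup H] [InnerProductSpace ℂ H] [CompleteSpace H]
    (V : H →L[ℂ] H) (hV : (adjoint V) ∘L V = 1)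
    (f g : H) (hfg : adjoint V g + (inner ℂ f g : ℂ) • g = 0) :
    ∀ n : ℕ, 1 ≤ n →
      (V + rankOne f g) ^ (n + 1) = (V ^ n) ∘L (V + rankOne f g) := by
  have hR := rankOne_comp_eq_zero V f g hfg
  set S := V + rankOne f g with hS
  have hsq : S ^ 2 = V * S := by
    have : S * S = V * S + rankOne f g * S := by
      rw [hS]; exact add_comp _ _ _
    rw [sq, this, show rankOne f g * S = rankOne f g ∘L S from rfl, hR, add_zero]
  intro n hn
  induction n with
  | zero => omega
  | succ m ih =>
    rcases Nat.eq_or_lt_of_le hn with h1 | h1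
    · simp only [← h1]
      simpa [pow_one] using (hsq.trans rfl : S ^ 2 = V ∘L S)
    · have hm : 1 ≤ m := by omega
      have e : S ^ (m + 1 + 1) = S ^ (m + 1) * S := pow_succ S (m + 1)
      rw [e, ih hm, show (V ^ m) ∘L S = V ^ m * S from rfl, mul_assoc, ← sq, hsq,
        ← mul_assoc, ← pow_succ]
      rfl
end

section
/- Let H be a separable complex Hilbert space with orthonormal basis (e_n)_{n≥0}, let D ∈ B(H) be the diagonal operator D e_n = α_n e_n with all α_n ≠ 0, and let f = Σ a_n e_n and g = Σ b_n e_n be vectors in H with a_n ≠ 0 and b_n ≠ 0 for all n. Set T = D + f⊗g. Then T is not injective (i.e., 0 is an eigenvalue of T) if and only if the sequence (a_n/α_n)_{n≥0} is square summable and 1 + Σ_{n≥0} a_n \overline{b_n}/α_n = 0. -/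
open ContinuousLinearMap
open scoped ComplexConjugate

section Aux

variable {H : Type*} [NormedAddCommGroup H] [InnerProductSpace ℂ H] [CompleteSpace H]

/-- Diagonal coefficient formula: `⟪e m, D h⟫ = α m ⟪e m, h⟫`. -/
lemma coeffD (e : HilbertBasis ℕ ℂ H) (α : ℕ → ℂ)
    (D : H →L[ℂ] H) (hD : ∀ n, D (e n) = α n • e n) (h : H) (m : ℕ) :
    (inner ℂ (e m) (D h) : ℂ) = α m * inner ℂ (e m) h := by
  have h1 : HasSum (fun n => e.repr h n • e n) h := e.hasSum_repr h
  have h2 := h1.mapL D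
  simp only [map_smul, hD] at h2
  have h3 := h2.mapL (innerSL ℂ (e m))
  have h4 : HasSum (fun n => (if n = m then α m * e.repr h m else 0))
      ((inner ℂ (e m) (D h) : ℂ)) := by
    convert h3 using 3 with n
    case e'_3 => rfl
    case e'_6 => rfl
    have horth := orthonormal_iff_ite.mp e.orthonormal m n
    simp only [innerSL_apply_apply, inner_smul_right, horth]
    by_cases hnm : n = m
    · subst hnm; simp [mul_comm]
    · simp [Ne.symm hnm, hnm]
  have h5 := h4.unique (hasSum_ite_eq m _)
  rw [h5, e.repr_apply_apply]

end Aux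

/-- **Proposition (Ionascu).** Let `D` be a diagonal operator with nonzero
diagonal entries `α_n` and let `f, g` have nonzero Fourier coefficients
`a_n = ⟨f, e_n⟩`, `b_n = ⟨g, e_n⟩` (inner product linear in the first
argument, so `a_n = ⟪e_n, f⟫` in Mathlib's convention). Then `T = D + f ⊗ g`
admits `0` as an eigenvalue iff `(a_n/α_n)` is square summable and
`1 + ∑ a_n conj(b_n)/α_n = 0`. -/
theorem not_injective_diagonal_rankOne_iff
    {H : Type*} [NormedAddCommGroup H] [InnerProductSpace ℂ H] [CompleteSpace H]
    (e : HilbertBasis ℕ ℂ H) (α : ℕ → ℂ) (hα : ∀ n, α n ≠ 0)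
    (D : H →L[ℂ] H) (hD : ∀ n, D (e n) = α n • e n)
    (f g : H)
    (hf : ∀ n, (inner ℂ (e n) f : ℂ) ≠ 0) (hg : ∀ n, (inner ℂ (e n) g : ℂ) ≠ 0) :
    ¬ Function.Injective ⇑(D + rankOne f g) ↔
      (Summable (fun n => ‖(inner ℂ (e n) f : ℂ) / α n‖ ^ 2)
        ∧ 1 + ∑' n, (inner ℂ (e n) f : ℂ) * conj (inner ℂ (e n) g : ℂ) / α n = 0) := by
  have key : ¬ Function.Injective ⇑(D + rankOne f g) ↔
      ∃ h, (D + rankOne f g) h = 0 ∧ h ≠ 0 := by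
    rw [injective_iff_map_eq_zero]
    push_neg
    rfl
  have Tapp : ∀ h : H, (D + rankOne f g) h = D h + (inner ℂ g h : ℂ) • f := by
    intro h
    simp [rankOne, add_apply, smulRight_apply, innerSL_apply_apply]
  rw [key]
  constructor
  · rintro ⟨h, hTh, hh0⟩
    rw [Tapp] at hTh
    set c : ℂ := inner ℂ g h with hc_def
    have hc : ∀ n, α n * (inner ℂ (e n) h : ℂ) + c * inner ℂ (e n) f = 0 := by
      intro n
      have h1 : (inner ℂ (e n) (D h + c • f) : ℂ) = 0 := by rw [hTh, inner_zero_right]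
      rw [inner_add_right, inner_smul_right, coeffD e α D hD] at h1
      exact h1
    have hc0 : c ≠ 0 := by
      intro hc0
      apply hh0
      have hz : ∀ n, e.repr h n = 0 := by
        intro n
        rw [e.repr_apply_apply]
        have h1 := hc n
        rw [hc0, zero_mul, add_zero] at h1
        exact (mul_eq_zero.mp h1).resolve_left (hα n)
      apply e.repr.injective
      ext n
      simp [hz n]
    have hco : ∀ n, (inner ℂ (e n) h : ℂ) = -c * ((inner ℂ (e n) f : ℂ) / α n) := by
      intro n
      have h2 : (inner ℂ (e n) h : ℂ) = (-(c * inner ℂ (e n) f)) / α n := by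
        rw [eq_div_iff (hα n)]
        linear_combination hc n
      rw [h2]
      ring
    constructor
    · have hs := (lp.memℓp (e.repr h)).summable (p := 2) (by norm_num)
      have hs' : Summable (fun n => ‖e.repr h n‖ ^ 2) := by
        refine hs.congr fun n => ?_
        rw [show (ENNReal.toReal 2) = ((2 : ℕ) : ℝ) by norm_num, Real.rpow_natCast]
      have hs2 : Summable (fun n => ‖c‖ ^ 2 * ‖(inner ℂ (e n) f : ℂ) / α n‖ ^ 2) := by
        refine hs'.congr fun n => ?_
        rw [e.repr_apply_apply, hco n, norm_mul, norm_neg, mul_pow]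
      have hcn : (‖c‖ ^ 2 : ℝ) ≠ 0 := pow_ne_zero 2 (norm_ne_zero_iff.mpr hc0)
      exact (summable_mul_left_iff hcn).mp hs2
    · have h1 := e.tsum_inner_mul_inner g h
      have h2 : ∀ n, (inner ℂ g (e n) : ℂ) * inner ℂ (e n) h
          = -c * ((inner ℂ (e n) f : ℂ) * conj (inner ℂ (e n) g : ℂ) / α n) := by
        intro n
        rw [hco n, inner_conj_symm]
        ring
      rw [tsum_congr h2, tsum_mul_left, ← hc_def] at h1
      have h3 : c * (1 + ∑' n, (inner ℂ (e n) f : ℂ) * conj (inner ℂ (e n) g : ℂ) / α n) = 0 := by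
        linear_combination -h1
      exact (mul_eq_zero.mp h3).resolve_left hc0
  · rintro ⟨hsum, hsum0⟩
    set w : ℕ → ℂ := fun n => (inner ℂ (e n) f : ℂ) / α n with hw_def
    have hmem : Memℓp w 2 := by
      apply memℓp_gen
      have : ENNReal.toReal 2 = ((2 : ℕ) : ℝ) := by norm_num
      rw [this]
      refine hsum.congr fun n => ?_
      rw [Real.rpow_natCast]
    set h : H := e.repr.symm ⟨w, hmem⟩ with hh_def
    have hrep : ∀ n, (inner ℂ (e n) h : ℂ) = w n := by
      intro n
      rw [← e.repr_apply_apply, hh_def, e.repr.apply_symm_apply]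
    have hne : h ≠ 0 := by
      intro h0
      have := hrep 0
      rw [h0, inner_zero_right] at this
      exact (div_ne_zero (hf 0) (hα 0)) this.symm
    have h1 : HasSum (fun n => w n • e n) h := e.hasSum_repr_symm ⟨w, hmem⟩
    have h2 := h1.mapL D
    simp only [map_smul, hD] at h2
    have heq : (fun n => w n • α n • e n) = fun n => (inner ℂ (e n) f : ℂ) • e n := by
      funext n
      rw [smul_smul, hw_def, div_mul_cancel₀ _ (hα n)]
    have h3 : HasSum (fun n => (inner ℂ (e n) f : ℂ) • e n) (D h) := heq ▸ h2
    have h4 : HasSum (fun n => (inner ℂ (e n) f : ℂ) • e n) f := by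
      have := e.hasSum_repr f
      simpa [e.repr_apply_apply] using this
    have hDh : D h = f := h3.unique h4
    have hgh : (inner ℂ g h : ℂ) = -1 := by
      rw [← e.tsum_inner_mul_inner g h]
      have h5 : ∀ n, (inner ℂ g (e n) : ℂ) * inner ℂ (e n) h
          = (inner ℂ (e n) f : ℂ) * conj (inner ℂ (e n) g : ℂ) / α n := by
        intro n
        rw [hrep n, inner_conj_symm]
        simp only [hw_def]
        ring
      rw [tsum_congr h5]
      linear_combination hsum0
    refine ⟨h, ?_, hne⟩
    rw [Tapp, hDh, hgh]
    simp
end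

section
/- Let H be a separable complex Hilbert space with orthonormal basis (e_n)_{n≥0}, let D ∈ B(H) be the diagonal operator D e_n = α_n e_n with all α_n ≠ 0, and let f = Σ a_n e_n and g = Σ b_n e_n with a_n ≠ 0 and b_n ≠ 0 for all n. Set T = D + f⊗g. Then every basis vector e_n belongs to the range of T if and only if the sequence (a_n/α_n)_{n≥0} is square summable and 1 + Σ_{n≥0} a_n \overline{b_n}/α_n ≠ 0. -/
open ContinuousLinearMap
open scoped ComplexConjugate

section Aux

set_option linter.unusedSectionVars false

variable {H : Type*} [NormedAddCommGroup H] [InnerProductSpace ℂ H] [CompleteSpace H]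

lemma summable_sq_coord (e : HilbertBasis ℕ ℂ H) (g : H) :
    Summable (fun n => ‖(inner ℂ (e n) g : ℂ)‖ ^ 2) := by
  have h := lp.memℓp (e.repr g)
  rw [memℓp_gen_iff (by norm_num)] at h
  refine h.congr ?_
  intro n
  rw [e.repr_apply_apply]
  norm_num

lemma memℓp_two_of (c : ℕ → ℂ) (h : Summable fun n => ‖c n‖ ^ 2) : Memℓp c 2 := by
  apply memℓp_gen
  refine h.congr ?_
  intro n
  norm_num

lemma ext_coord (e : HilbertBasis ℕ ℂ H) {x y : H}
    (h : ∀ n, (inner ℂ (e n) x : ℂ) = inner ℂ (e n) y) : x = y := by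
  apply e.repr.injective
  ext n
  rw [e.repr_apply_apply, e.repr_apply_apply, h]

lemma coord_D (e : HilbertBasis ℕ ℂ H) (α : ℕ → ℂ)
    (D : H →L[ℂ] H) (hD : ∀ n, D (e n) = α n • e n) (x : H) (m : ℕ) :
    (inner ℂ (e m) (D x) : ℂ) = α m * inner ℂ (e m) x := by
  have h2 := ((e.hasSum_repr x).mapL D).mapL (innerSL ℂ (e m))
  have hterm : (fun n => innerSL ℂ (e m) (D (e.repr x n • e n)))
      = fun n => if n = m then α m * e.repr x m else 0 := by
    funext n
    have hne : (inner ℂ (e m) (e n) : ℂ) = if m = n then 1 else 0 :=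
      orthonormal_iff_ite.mp e.orthonormal m n
    simp only [innerSL_apply_apply, map_smul, hD, inner_smul_right, hne]
    by_cases h : n = m
    · subst h; simp [mul_comm]
    · simp [Ne.symm h, h]
  rw [hterm] at h2
  have h3 := hasSum_ite_eq m (α m * e.repr x m)
  have h4 := h3.unique h2
  rw [innerSL_apply_apply] at h4
  rw [← h4, e.repr_apply_apply]

lemma coord_T (e : HilbertBasis ℕ ℂ H) (α : ℕ → ℂ)
    (D : H →L[ℂ] H) (hD : ∀ n, D (e n) = α n • e n) (f g : H) (x : H) (m : ℕ) :
    (inner ℂ (e m) ((D + rankOne f g) x) : ℂ)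
      = α m * inner ℂ (e m) x + inner ℂ g x * inner ℂ (e m) f := by
  have : (inner ℂ (e m) (rankOne f g x) : ℂ) = inner ℂ g x * inner ℂ (e m) f := by
    simp [rankOne, inner_smul_right]
  rw [ContinuousLinearMap.add_apply, inner_add_right, coord_D e α D hD, this]

lemma summable_S (e : HilbertBasis ℕ ℂ H) (α : ℕ → ℂ) (f g : H)
    (hA : Summable (fun n => ‖(inner ℂ (e n) f : ℂ) / α n‖ ^ 2)) :
    Summable (fun n => (inner ℂ (e n) f : ℂ) * conj (inner ℂ (e n) g : ℂ) / α n) := by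
  have hB := summable_sq_coord e g
  refine Summable.of_norm (Summable.of_nonneg_of_le (fun n => norm_nonneg _) (fun n => ?_)
    (((hA.add hB).div_const 2)))
  have h1 : ‖(inner ℂ (e n) f : ℂ) * conj (inner ℂ (e n) g : ℂ) / α n‖
      = ‖(inner ℂ (e n) f : ℂ) / α n‖ * ‖(inner ℂ (e n) g : ℂ)‖ := by
    rw [norm_div, norm_mul, norm_div, RCLike.norm_conj]
    ring
  rw [h1]
  nlinarith [sq_nonneg (‖(inner ℂ (e n) f : ℂ) / α n‖ - ‖(inner ℂ (e n) g : ℂ)‖),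
    norm_nonneg ((inner ℂ (e n) f : ℂ) / α n), norm_nonneg ((inner ℂ (e n) g : ℂ))]

/-- Key computation: if `x` has coordinates `(δ_{nm} - λ a_n)/α_n`, then
`⟪g, x⟫ = conj(b_m)/α_m - λ * S`. -/
lemma inner_g_eq (e : HilbertBasis ℕ ℂ H) (α : ℕ → ℂ) (hα : ∀ n, α n ≠ 0) (f g : H)
    (hA : Summable (fun n => ‖(inner ℂ (e n) f : ℂ) / α n‖ ^ 2))
    (m : ℕ) (lam : ℂ) (x : H)
    (hx : ∀ n, (inner ℂ (e n) x : ℂ)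
      = ((if n = m then 1 else 0) - lam * inner ℂ (e n) f) / α n) :
    (inner ℂ g x : ℂ) = conj (inner ℂ (e m) g : ℂ) / α m
      - lam * ∑' n, (inner ℂ (e n) f : ℂ) * conj (inner ℂ (e n) g : ℂ) / α n := by
  have hPar := e.hasSum_inner_mul_inner g x
  have hterm : (fun n => (inner ℂ g (e n) : ℂ) * inner ℂ (e n) x)
      = fun n => (if n = m then conj (inner ℂ (e m) g : ℂ) / α m else 0)
          - lam * ((inner ℂ (e n) f : ℂ) * conj (inner ℂ (e n) g : ℂ) / α n) := by
    funext n
    have hc : (inner ℂ g (e n) : ℂ) = conj (inner ℂ (e n) g : ℂ) := (inner_conj_symm _ _).symm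
    rw [hx n, hc]
    by_cases h : n = m
    · subst h
      simp only [if_pos rfl]
      field_simp
      rw [if_pos trivial, if_pos trivial]
      ring
    · simp only [if_neg h]
      field_simp
      ring
  rw [hterm] at hPar
  have h2 := (hasSum_ite_eq m (conj (inner ℂ (e m) g : ℂ) / α m)).sub
    (((summable_S e α f g hA).hasSum).mul_left lam)
  exact hPar.unique h2

end Aux

/-- **Proposition.** With `D` diagonal (nonzero entries `α_n`) and `f, g` with
nonzero Fourier coefficients `a_n = ⟨f, e_n⟩`, `b_n = ⟨g, e_n⟩`, every basis
vector `e_n` lies in the range of `T = D + f ⊗ g` iff `(a_n/α_n)` is square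
summable and `1 + ∑ a_n conj(b_n)/α_n ≠ 0`. -/
theorem basis_mem_range_diagonal_rankOne_iff
    {H : Type*} [NormedAddCommGroup H] [InnerProductSpace ℂ H] [CompleteSpace H]
    (e : HilbertBasis ℕ ℂ H) (α : ℕ → ℂ) (hα : ∀ n, α n ≠ 0)
    (D : H →L[ℂ] H) (hD : ∀ n, D (e n) = α n • e n)
    (f g : H)
    (hf : ∀ n, (inner ℂ (e n) f : ℂ) ≠ 0) (hg : ∀ n, (inner ℂ (e n) g : ℂ) ≠ 0) :
    (∀ n, e n ∈ Set.range ⇑(D + rankOne f g)) ↔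
      (Summable (fun n => ‖(inner ℂ (e n) f : ℂ) / α n‖ ^ 2)
        ∧ 1 + ∑' n, (inner ℂ (e n) f : ℂ) * conj (inner ℂ (e n) g : ℂ) / α n ≠ 0) := by
  constructor
  · intro h
    obtain ⟨x, hx⟩ := h 0
    set lam : ℂ := inner ℂ g x with hlamdef
    have hcoord : ∀ n, α n * inner ℂ (e n) x + lam * inner ℂ (e n) f
        = (if n = 0 then 1 else 0 : ℂ) := by
      intro n
      have h1 : (inner ℂ (e n) ((D + rankOne f g) x) : ℂ) = inner ℂ (e n) (e 0) := by rw [hx]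
      rw [coord_T e α D hD f g x n, orthonormal_iff_ite.mp e.orthonormal n 0] at h1
      rw [hlamdef]
      exact h1
    have hxn : ∀ n, (inner ℂ (e n) x : ℂ)
        = ((if n = 0 then 1 else 0) - lam * inner ℂ (e n) f) / α n := by
      intro n
      field_simp [hα n]
      linear_combination hcoord n
    have hlam : lam ≠ 0 := by
      intro h0
      have hx0 : x = (α 0)⁻¹ • e 0 := by
        apply ext_coord e
        intro n
        rw [hxn n, h0, inner_smul_right, orthonormal_iff_ite.mp e.orthonormal n 0]
        by_cases h : n = 0
        · subst h; simp
        · simp [h]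
      have hne : (inner ℂ g (e 0) : ℂ) ≠ 0 := by
        rw [← inner_conj_symm]
        intro hh
        exact hg 0 (by simpa using congrArg conj hh)
      rw [hlamdef, hx0, inner_smul_right] at h0
      exact (mul_ne_zero (inv_ne_zero (hα 0)) hne) h0
    have hx2 := summable_sq_coord e x
    have hA : Summable (fun n => ‖(inner ℂ (e n) f : ℂ) / α n‖ ^ 2) := by
      have hx2' := hx2.mul_left ((‖lam‖ ^ 2)⁻¹)
      have hdiff : Summable (fun n => ‖(inner ℂ (e n) f : ℂ) / α n‖ ^ 2
          - (‖lam‖ ^ 2)⁻¹ * ‖(inner ℂ (e n) x : ℂ)‖ ^ 2) := by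
        apply summable_of_ne_finset_zero (s := {0})
        intro n hn
        simp only [Finset.mem_singleton] at hn
        have hxv : (inner ℂ (e n) x : ℂ) = -(lam * inner ℂ (e n) f) / α n := by
          rw [hxn n]; simp [hn]
        have hl : ‖lam‖ ≠ 0 := norm_ne_zero_iff.mpr hlam
        rw [hxv]
        simp only [norm_div, norm_neg, norm_mul]
        have h2 : (‖lam‖ * ‖(inner ℂ (e n) f : ℂ)‖ / ‖α n‖) ^ 2
            = ‖lam‖ ^ 2 * (‖(inner ℂ (e n) f : ℂ)‖ / ‖α n‖) ^ 2 := by ring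
        rw [h2, ← mul_assoc, inv_mul_cancel₀ (pow_ne_zero 2 hl), one_mul, sub_self]
      have hsum := hdiff.add hx2'
      refine hsum.congr ?_
      intro n
      ring
    refine ⟨hA, ?_⟩
    intro h10
    have hgx := inner_g_eq e α hα f g hA 0 lam x hxn
    rw [← hlamdef] at hgx
    have hzero : conj (inner ℂ (e 0) g : ℂ) / α 0 = 0 := by
      linear_combination lam * h10 - hgx
    rcases div_eq_zero_iff.mp hzero with hh | hh
    · exact hg 0 (by simpa using congrArg conj hh)
    · exact hα 0 hh
  · rintro ⟨hA, hs⟩ m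
    set S : ℂ := ∑' n, (inner ℂ (e n) f : ℂ) * conj (inner ℂ (e n) g : ℂ) / α n with hSdef
    set lam : ℂ := conj (inner ℂ (e m) g : ℂ) / (α m * (1 + S)) with hlamdef
    set c : ℕ → ℂ := (fun n => ((if n = m then 1 else 0) : ℂ) / α n)
        - (fun n => lam * ((inner ℂ (e n) f : ℂ) / α n)) with hcdef
    have hc : Memℓp c 2 := by
      have h1 : Memℓp (fun n => ((if n = m then 1 else 0) : ℂ) / α n) 2 := by
        apply memℓp_two_of
        apply summable_of_ne_finset_zero (s := {m})
        intro n hn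
        simp only [Finset.mem_singleton] at hn
        simp [hn]
      have h2 : Memℓp (fun n => lam * ((inner ℂ (e n) f : ℂ) / α n)) 2 := by
        apply memℓp_two_of
        refine (hA.mul_left (‖lam‖ ^ 2)).congr ?_
        intro n
        rw [norm_mul, mul_pow]
      exact h1.sub h2
    set x : H := e.repr.symm (⟨c, hc⟩ : lp (fun _ : ℕ => ℂ) 2) with hxdef
    have hxc : ∀ n, (inner ℂ (e n) x : ℂ) = c n := by
      intro n
      rw [← e.repr_apply_apply, hxdef, LinearIsometryEquiv.apply_symm_apply]
    have hxn : ∀ n, (inner ℂ (e n) x : ℂ)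
        = ((if n = m then 1 else 0) - lam * inner ℂ (e n) f) / α n := by
      intro n
      rw [hxc n, hcdef]
      simp only [Pi.sub_apply]
      ring
    have hgx := inner_g_eq e α hα f g hA m lam x hxn
    rw [← hSdef] at hgx
    have hlameq : conj (inner ℂ (e m) g : ℂ) / α m = lam * (1 + S) := by
      rw [hlamdef]
      field_simp [hs]
    have hgx2 : (inner ℂ g x : ℂ) = lam := by
      rw [hgx, hlameq]; ring
    refine ⟨x, ext_coord e fun n => ?_⟩
    rw [coord_T e α D hD f g x n, hxn n, hgx2,
      orthonormal_iff_ite.mp e.orthonormal n m]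
    field_simp [hα n]
    ring
end

section
/- Let H be a separable complex Hilbert space with orthonormal basis (e_n)_{n≥0}, let D ∈ B(H) be the diagonal operator D e_n = α_n e_n with all α_n ≠ 0, and let f = Σ a_n e_n and g = Σ b_n e_n with a_n ≠ 0 and b_n ≠ 0 for all n. If T = D + f⊗g is bounded below (there exists ε > 0 with ‖Th‖ ≥ ε‖h‖ for all h ∈ H), then D is invertible in B(H); in particular, there exists M > 0 with |α_n| > M for all n. -/
open ContinuousLinearMap
open scoped ENNReal NNReal

/-- **Lemma.** If `T = D + f ⊗ g` is bounded below (with `D` diagonal with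
nonzero entries and `f, g` having nonzero Fourier coefficients), then `D` is
invertible in `B(H)`; in particular the diagonal entries are uniformly bounded
away from `0`. -/
theorem diagonal_invertible_of_boundedBelow
    {H : Type*} [NormedAddCommGroup H] [InnerProductSpace ℂ H] [CompleteSpace H]
    (e : HilbertBasis ℕ ℂ H) (α : ℕ → ℂ) (hα : ∀ n, α n ≠ 0)
    (D : H →L[ℂ] H) (hD : ∀ n, D (e n) = α n • e n)
    (f g : H)
    (hf : ∀ n, (inner ℂ (e n) f : ℂ) ≠ 0) (hg : ∀ n, (inner ℂ (e n) g : ℂ) ≠ 0)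
    (hbb : ∃ ε > 0, ∀ h : H, ε * ‖h‖ ≤ ‖(D + rankOne f g) h‖) :
    IsUnit D ∧ ∃ M > 0, ∀ n, M < ‖α n‖ := by
  classical
  obtain ⟨ε, hε, hT⟩ := hbb
  -- coefficients of `g` tend to zero
  have hsumg : Summable (fun n => ‖e.repr g n‖ ^ (2 : ℕ)) := by
    have h2 : (0 : ℝ) < (2 : ℝ≥0∞).toReal := by norm_num
    have := (lp.memℓp (e.repr g)).summable h2
    have h2' : ((2 : ℝ≥0∞).toReal) = ((2 : ℕ) : ℝ) := by norm_num
    rw [h2'] at this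
    simpa [Real.rpow_natCast] using this
  have hten : Filter.Tendsto (fun n => ‖e.repr g n‖) Filter.atTop (nhds 0) := by
    have h1 := hsumg.tendsto_atTop_zero
    have h2 := (Real.continuous_sqrt.tendsto 0).comp h1
    rw [Real.sqrt_zero] at h2
    refine h2.congr fun n => ?_
    exact Real.sqrt_sq (norm_nonneg _)
  have htenf : Filter.Tendsto (fun n => ‖e.repr g n‖ * ‖f‖) Filter.atTop (nhds 0) := by
    simpa using hten.mul_const ‖f‖
  obtain ⟨N, hN⟩ := (Filter.eventually_atTop).1
    (htenf.eventually_lt_const (by positivity : (0:ℝ) < ε / 2))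
  -- basic estimate at each basis vector
  have hTn : ∀ n, ε ≤ ‖α n‖ + ‖e.repr g n‖ * ‖f‖ := by
    intro n
    have hen : ‖e n‖ = 1 := e.orthonormal.1 n
    have h2 : (D + rankOne f g) (e n) = α n • e n + (inner ℂ g (e n) : ℂ) • f := by
      simp [rankOne, hD n]
    have h3 : ‖(inner ℂ g (e n) : ℂ)‖ = ‖e.repr g n‖ := by
      rw [e.repr_apply_apply, norm_inner_symm]
    calc ε = ε * ‖e n‖ := by rw [hen, mul_one]
      _ ≤ ‖(D + rankOne f g) (e n)‖ := hT (e n)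
      _ ≤ ‖α n • e n‖ + ‖(inner ℂ g (e n) : ℂ) • f‖ := by rw [h2]; exact norm_add_le _ _
      _ = ‖α n‖ + ‖e.repr g n‖ * ‖f‖ := by rw [norm_smul, norm_smul, hen, mul_one, h3]
  have htail : ∀ n, N ≤ n → ε / 2 < ‖α n‖ := by
    intro n hn
    have h1 := hTn n
    have h2 := hN n hn
    linarith
  -- uniform strict lower bound M
  have hsne : (insert (ε / 2) ((Finset.range N).image fun n => ‖α n‖)).Nonempty :=
    ⟨ε / 2, Finset.mem_insert_self _ _⟩
  obtain ⟨m, hm_mem, hm_min⟩ :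
      ∃ m ∈ insert (ε / 2) ((Finset.range N).image fun n => ‖α n‖),
        ∀ x ∈ insert (ε / 2) ((Finset.range N).image fun n => ‖α n‖), m ≤ x :=
    ⟨_, Finset.min'_mem _ hsne, fun x hx => Finset.min'_le _ x hx⟩
  have hmpos : 0 < m := by
    rcases Finset.mem_insert.1 hm_mem with h | h
    · rw [h]; positivity
    · obtain ⟨n, -, hn⟩ := Finset.mem_image.1 h
      rw [← hn]
      exact norm_pos_iff.2 (hα n)
  have hMpos : 0 < m / 2 := by positivity
  have hMlt : m / 2 < m := by linarith
  have hM : ∀ n, m / 2 < ‖α n‖ := by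
    intro n
    rcases lt_or_ge n N with h | h
    · have hmem : ‖α n‖ ∈ insert (ε / 2) ((Finset.range N).image fun n => ‖α n‖) :=
        Finset.mem_insert_of_mem (Finset.mem_image.2 ⟨n, Finset.mem_range.2 h, rfl⟩)
      exact lt_of_lt_of_le hMlt (hm_min _ hmem)
    · have h1 : m ≤ ε / 2 := hm_min _ (Finset.mem_insert_self _ _)
      exact lt_of_lt_of_le hMlt (h1.trans (htail n h).le)
  -- `D` acts diagonally on coefficients
  have hrepr : ∀ (h : H) (i : ℕ), e.repr (D h) i = α i * e.repr h i := by
    intro h i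
    have h1 : HasSum (fun n => e.repr h n • (α n • e n)) (D h) := by
      have := (e.hasSum_repr h).mapL D
      simpa [hD] using this
    have h2 : HasSum (fun n => (inner ℂ (e i) (e.repr h n • (α n • e n)) : ℂ))
        (inner ℂ (e i) (D h)) := by
      have := h1.mapL (innerSL ℂ (e i))
      simp only [innerSL_apply_apply] at this
      exact this
    have h3 : (fun n => (inner ℂ (e i) (e.repr h n • (α n • e n)) : ℂ))
        = fun n => if n = i then α i * e.repr h i else 0 := by
      funext n
      rw [inner_smul_right, inner_smul_right, orthonormal_iff_ite.1 e.orthonormal]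
      by_cases hni : n = i
      · subst hni; simp [mul_comm]
      · simp [Ne.symm hni, hni]
    have h4 : HasSum (fun n => if n = i then α i * e.repr h i else 0)
        (α i * e.repr h i) := hasSum_ite_eq i _
    rw [h3] at h2
    have h5 : (inner ℂ (e i) (D h) : ℂ) = α i * e.repr h i := h2.unique h4
    rw [e.repr_apply_apply, h5]
  -- `D` is bounded below by `M`
  have hMle : ∀ n, m / 2 ≤ ‖α n‖ := fun n => (hM n).le
  have key : ∀ h : H, m / 2 * ‖h‖ ≤ ‖D h‖ := by
    intro h
    have hn1 : ‖D h‖ = ‖e.repr (D h)‖ := (e.repr.norm_map _).symm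
    have hn2 : ‖h‖ = ‖e.repr h‖ := (e.repr.norm_map _).symm
    rw [hn1, hn2]
    have h2 : (0 : ℝ) < (2 : ℝ≥0∞).toReal := by norm_num
    have hx := lp.norm_rpow_eq_tsum h2 (e.repr h)
    have hy := lp.norm_rpow_eq_tsum h2 (e.repr (D h))
    have h2' : ((2 : ℝ≥0∞).toReal) = ((2 : ℕ) : ℝ) := by norm_num
    rw [h2'] at hx hy
    simp only [Real.rpow_natCast] at hx hy
    have hsx : Summable (fun i => ‖e.repr h i‖ ^ (2 : ℕ)) := by
      have := (lp.memℓp (e.repr h)).summable h2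
      rw [h2'] at this
      simpa [Real.rpow_natCast] using this
    have hsy : Summable (fun i => ‖e.repr (D h) i‖ ^ (2 : ℕ)) := by
      have := (lp.memℓp (e.repr (D h))).summable h2
      rw [h2'] at this
      simpa [Real.rpow_natCast] using this
    have hpt : ∀ i, (m / 2) ^ (2:ℕ) * ‖e.repr h i‖ ^ (2:ℕ) ≤ ‖e.repr (D h) i‖ ^ (2:ℕ) := by
      intro i
      have h5 : ‖e.repr (D h) i‖ = ‖α i‖ * ‖e.repr h i‖ := by
        rw [hrepr h i, norm_mul]
      rw [h5, ← mul_pow]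
      exact pow_le_pow_left₀ (by positivity)
        (mul_le_mul_of_nonneg_right (hMle i) (norm_nonneg _)) 2
    have hts : (m / 2) ^ (2:ℕ) * ∑' i, ‖e.repr h i‖ ^ (2:ℕ)
        ≤ ∑' i, ‖e.repr (D h) i‖ ^ (2:ℕ) := by
      rw [← tsum_mul_left]
      exact (hsx.mul_left _).tsum_le_tsum hpt hsy
    have hsq : (m / 2 * ‖e.repr h‖) ^ (2:ℕ) ≤ ‖e.repr (D h)‖ ^ (2:ℕ) := by
      rw [mul_pow, hx, hy]; exact hts
    exact (pow_le_pow_iff_left₀ (by positivity : (0:ℝ) ≤ m / 2 * ‖e.repr h‖)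
      (norm_nonneg _) (two_ne_zero)).1 hsq
  -- injectivity
  have hker : LinearMap.ker (D : H →ₗ[ℂ] H) = ⊥ := by
    rw [LinearMap.ker_eq_bot']
    intro h hh
    have := key h
    rw [show D h = 0 from hh, norm_zero] at this
    have : ‖h‖ ≤ 0 := by
      have := (mul_nonpos_iff.1 this)
      rcases this with ⟨h1, h2⟩ | ⟨h1, h2⟩
      · exact h2
      · exact absurd h1 (by linarith)
    exact norm_le_zero_iff.1 this
  -- closed range
  have hanti : AntilipschitzWith (⟨m / 2, hMpos.le⟩ : ℝ≥0)⁻¹ D := by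
    apply D.antilipschitz_of_bound
    intro x
    rw [NNReal.coe_inv (⟨m / 2, hMpos.le⟩ : ℝ≥0)]
    erw [NNReal.coe_mk]
    rw [inv_mul_eq_div, le_div_iff₀ hMpos]
    calc ‖x‖ * (m / 2) = m / 2 * ‖x‖ := mul_comm _ _
      _ ≤ ‖D x‖ := key x
  have hclosed : IsClosed (Set.range D) := hanti.isClosed_range D.uniformContinuous
  have hclosed' : IsClosed ((LinearMap.range (D : H →ₗ[ℂ] H) : Submodule ℂ H) : Set H) := by
    have : ((LinearMap.range (D : H →ₗ[ℂ] H) : Submodule ℂ H) : Set H) = Set.range D :=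
      LinearMap.coe_range _
    rw [this]; exact hclosed
  -- dense range
  have hsub : Submodule.span ℂ (Set.range e) ≤ LinearMap.range (D : H →ₗ[ℂ] H) := by
    rw [Submodule.span_le]
    rintro x ⟨n, rfl⟩
    exact ⟨(α n)⁻¹ • e n, by
      rw [map_smul, ContinuousLinearMap.coe_coe, hD n, smul_smul, inv_mul_cancel₀ (hα n), one_smul]⟩
  have hrange : LinearMap.range (D : H →ₗ[ℂ] H) = ⊤ := by
    rw [eq_top_iff, ← e.dense_span]
    exact Submodule.topologicalClosure_minimal _ hsub hclosed'
  -- conclude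
  let E := ContinuousLinearEquiv.ofBijective D hker hrange
  have hE : ∀ y, D y = E y := fun y =>
    (congrFun (ContinuousLinearEquiv.coeFn_ofBijective D hker hrange) y).symm
  refine ⟨⟨⟨D, E.symm.toContinuousLinearMap, ?_, ?_⟩, rfl⟩, m / 2, hMpos, hM⟩
  · ext x
    show D (E.symm x) = x
    rw [hE]
    exact E.apply_symm_apply x
  · ext x
    show E.symm (D x) = x
    rw [hE]
    exact E.symm_apply_apply x
end

section
/- Let H be a complex Hilbert space, let D ∈ B(H) be bounded below (there exists ε > 0 with ‖Dh‖ ≥ ε‖h‖ for all h ∈ H), and let f, g ∈ H. If T = D + f⊗g is injective, then T is bounded below, hence left-invertible. -/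
open ContinuousLinearMap

/-- **Proposition.** If `D` is bounded below and `T = D + f ⊗ g` is injective,
then `T` is bounded below, hence left-invertible. -/
theorem boundedBelow_of_injective_rankOne_perturbation
    {H : Type*} [NormedAddCommGroup H] [InnerProductSpace ℂ H] [CompleteSpace H]
    (D : H →L[ℂ] H) (hD : ∃ ε > 0, ∀ h : H, ε * ‖h‖ ≤ ‖D h‖)
    (f g : H) (hinj : Function.Injective ⇑(D + rankOne f g)) :
    (∃ ε > 0, ∀ h : H, ε * ‖h‖ ≤ ‖(D + rankOne f g) h‖)
      ∧ ∃ S : H →L[ℂ] H, S ∘L (D + rankOne f g) = 1 := by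
  obtain ⟨ε, hε, hεD⟩ := hD
  set T : H →L[ℂ] H := D + rankOne f g with hTdef
  have key : ∃ δ > 0, ∀ h : H, δ * ‖h‖ ≤ ‖T h‖ := by
    by_contra hcon
    push_neg at hcon
    -- build a normalized sequence with `T uₙ → 0`
    have hseq : ∀ n : ℕ, ∃ u : H, ‖u‖ = 1 ∧ ‖T u‖ < 1 / (n + 1) := by
      intro n
      have hpos : (0 : ℝ) < 1 / (n + 1) := by positivity
      obtain ⟨h, hh⟩ := hcon (1 / (n + 1)) hpos
      have hne : h ≠ 0 := by
        rintro rfl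
        simp at hh
      have hnorm : (0 : ℝ) < ‖h‖ := norm_pos_iff.mpr hne
      refine ⟨(‖h‖ : ℂ)⁻¹ • h, ?_, ?_⟩
      · simp [norm_smul, inv_mul_cancel₀ hnorm.ne']
      · have : ‖T ((‖h‖ : ℂ)⁻¹ • h)‖ = ‖h‖⁻¹ * ‖T h‖ := by
          rw [map_smul, norm_smul]; simp
        rw [this]
        calc ‖h‖⁻¹ * ‖T h‖ < ‖h‖⁻¹ * (1 / (n + 1) * ‖h‖) := by
              exact (mul_lt_mul_iff_right₀ (by positivity)).2 hh
          _ = 1 / (n + 1) := by field_simp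
    choose u hu1 hu2 using hseq
    have hTu0 : Filter.Tendsto (fun n => T (u n)) Filter.atTop (nhds 0) := by
      rw [tendsto_zero_iff_norm_tendsto_zero]
      refine squeeze_zero (fun n => norm_nonneg _) (fun n => (hu2 n).le) ?_
      exact tendsto_one_div_add_atTop_nhds_zero_nat
    -- the coefficients ⟪g, uₙ⟫ are bounded, extract a convergent subsequence
    set c : ℕ → ℂ := fun n => inner ℂ g (u n) with hc
    have hcb : ∀ n, c n ∈ Metric.closedBall (0 : ℂ) ‖g‖ := by
      intro n
      simp only [Metric.mem_closedBall, dist_zero_right]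
      calc ‖c n‖ ≤ ‖g‖ * ‖u n‖ := norm_inner_le_norm _ _
        _ = ‖g‖ := by rw [hu1 n, mul_one]
    obtain ⟨a, -, φ, hφ, hca⟩ :=
      tendsto_subseq_of_bounded Metric.isBounded_closedBall hcb
    -- D (u (φ n)) converges to -(a • f)
    have hDu : Filter.Tendsto (fun n => D (u (φ n))) Filter.atTop (nhds (0 - a • f)) := by
      have h1 : ∀ n, D (u (φ n)) = T (u (φ n)) - c (φ n) • f := by
        intro n
        simp [hTdef, rankOne, hc]
      simp only [h1]
      exact ((hTu0.comp hφ.tendsto_atTop).sub ((hca.smul_const f)))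
    -- hence (u ∘ φ) is Cauchy
    have hDuC : CauchySeq (fun n => D (u (φ n))) := hDu.cauchySeq
    have huC : CauchySeq (fun n => u (φ n)) := by
      rw [Metric.cauchySeq_iff] at hDuC ⊢
      intro η hη
      obtain ⟨N, hN⟩ := hDuC (ε * η) (by positivity)
      refine ⟨N, fun m hm n hn => ?_⟩
      have := hN m hm n hn
      rw [dist_eq_norm] at this ⊢
      have hle : ε * ‖u (φ m) - u (φ n)‖ ≤ ‖D (u (φ m)) - D (u (φ n))‖ := by
        simpa [map_sub] using hεD (u (φ m) - u (φ n))
      have : ε * ‖u (φ m) - u (φ n)‖ < ε * η := lt_of_le_of_lt hle this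
      exact lt_of_mul_lt_mul_left this hε.le
    obtain ⟨x, hx⟩ := cauchySeq_tendsto_of_complete huC
    have hTx : T x = 0 := by
      have h1 : Filter.Tendsto (fun n => T (u (φ n))) Filter.atTop (nhds (T x)) :=
        (T.continuous.tendsto x).comp hx
      have h2 : Filter.Tendsto (fun n => T (u (φ n))) Filter.atTop (nhds 0) :=
        hTu0.comp hφ.tendsto_atTop
      exact tendsto_nhds_unique h1 h2
    have hx1 : ‖x‖ = 1 := by
      have h1 : Filter.Tendsto (fun n => ‖u (φ n)‖) Filter.atTop (nhds ‖x‖) :=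
        (continuous_norm.tendsto x).comp hx
      have h2 : Filter.Tendsto (fun n => ‖u (φ n)‖) Filter.atTop (nhds 1) := by
        simp only [hu1]
        exact tendsto_const_nhds
      exact tendsto_nhds_unique h1 h2
    have : x = 0 := hinj (by simp [hTx])
    rw [this] at hx1
    simp at hx1
  refine ⟨key, ?_⟩
  obtain ⟨δ, hδ, hb⟩ := key
  -- T is antilipschitz, hence has closed range
  have hA : AntilipschitzWith (⟨δ, hδ.le⟩ : NNReal)⁻¹ T := by
    apply T.antilipschitz_of_bound
    intro x
    show ‖x‖ ≤ δ⁻¹ * ‖T x‖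
    rw [le_inv_mul_iff₀ hδ]
    exact hb x
  set p : Submodule ℂ H := LinearMap.range (T : H →ₗ[ℂ] H) with hp
  have hclosed : IsClosed (p : Set H) := hA.isClosed_range T.uniformContinuous
  haveI : CompleteSpace p := hclosed.completeSpace_coe
  set Tc : H →L[ℂ] p := T.codRestrict p (fun x => LinearMap.mem_range_self _ x) with hTc
  have hTcinj : Function.Injective ⇑Tc := by
    intro x y hxy
    apply hinj
    have := congrArg (Subtype.val) hxy
    simpa [hTc] using this
  have hker : LinearMap.ker (Tc : H →ₗ[ℂ] p) = ⊥ := LinearMap.ker_eq_bot_of_injective hTcinj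
  have hrange : LinearMap.range (Tc : H →ₗ[ℂ] p) = ⊤ := by
    rw [LinearMap.range_eq_top]
    rintro ⟨y, hy⟩
    obtain ⟨x, rfl⟩ := hy
    exact ⟨x, rfl⟩
  set e := ContinuousLinearEquiv.ofBijective Tc hker hrange with he
  refine ⟨(e.symm : p →L[ℂ] H) ∘L (p.orthogonalProjection), ?_⟩
  ext x
  simp only [coe_comp', Function.comp_apply, one_apply, ContinuousLinearEquiv.coe_coe]
  have h1 : p.orthogonalProjection (T x) = Tc x := by
    have hmem : T x ∈ p := LinearMap.mem_range_self _ x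
    have : (p.orthogonalProjection (T x) : H) = T x := p.starProjection_eq_self_iff.mpr hmem
    apply Subtype.ext
    simp [this, hTc]
  rw [h1]
  exact e.symm_apply_apply x
end

section
/- Let H be a separable complex Hilbert space with orthonormal basis (e_n)_{n≥0}, let D ∈ B(H) be the diagonal operator D e_n = α_n e_n with all α_n ≠ 0, and let f = Σ a_n e_n and g = Σ b_n e_n with a_n ≠ 0 and b_n ≠ 0 for all n. Then T = D + f⊗g is left-invertible if and only if T is invertible (i.e., has a two-sided bounded inverse). -/
open ContinuousLinearMap

/-- A vector all of whose Fourier coefficients vanish is zero. -/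
lemma eq_zero_of_inner_basis_zero {H : Type*} [NormedAddCommGroup H] [InnerProductSpace ℂ H]
    [CompleteSpace H] (e : HilbertBasis ℕ ℂ H) {v : H}
    (h : ∀ n, (inner ℂ (e n) v : ℂ) = 0) : v = 0 := by
  have hrepr : e.repr v = 0 := by
    apply lp.ext
    funext n
    simpa [e.repr_apply_apply] using h n
  simpa using e.repr.map_eq_zero_iff.mp hrepr

/-- **Theorem.** If `D` is diagonal with nonzero entries and `f, g` have all
Fourier coefficients nonzero, then `T = D + f ⊗ g` is left-invertible iff it is
invertible. -/
theorem leftInvertible_iff_invertible_diagonal_rankOne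
    {H : Type*} [NormedAddCommGroup H] [InnerProductSpace ℂ H] [CompleteSpace H]
    (e : HilbertBasis ℕ ℂ H) (α : ℕ → ℂ) (hα : ∀ n, α n ≠ 0)
    (D : H →L[ℂ] H) (hD : ∀ n, D (e n) = α n • e n)
    (f g : H)
    (hf : ∀ n, (inner ℂ (e n) f : ℂ) ≠ 0) (hg : ∀ n, (inner ℂ (e n) g : ℂ) ≠ 0) :
    (∃ S : H →L[ℂ] H, S ∘L (D + rankOne f g) = 1) ↔
      (∃ S : H →L[ℂ] H, S ∘L (D + rankOne f g) = 1 ∧ (D + rankOne f g) ∘L S = 1) := by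
  constructor
  · rintro ⟨S, hS⟩
    set T : H →L[ℂ] H := D + rankOne f g with hT
    have hST : ∀ x : H, S (T x) = x := by
      intro x
      have := congrArg (fun A : H →L[ℂ] H => A x) hS
      simpa using this
    have hTe : ∀ n, T (e n) = α n • e n + (inner ℂ g (e n) : ℂ) • f := by
      intro n
      simp [hT, rankOne, hD n]
    have hcoef : ∀ (n : ℕ) (x : H), (inner ℂ (T (e n)) x : ℂ)
        = (starRingEnd ℂ) (α n) * inner ℂ (e n) x + (inner ℂ (e n) g : ℂ) * inner ℂ f x := by
      intro n x
      rw [hTe n, inner_add_left, inner_smul_left, inner_smul_left, inner_conj_symm]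
    -- Key step: anything orthogonal to the range of T is zero.
    have hperp : ∀ h : H, (∀ x : H, (inner ℂ (T x) h : ℂ) = 0) → h = 0 := by
      intro h hh
      set c : ℂ := inner ℂ f h with hc
      have hstar : ∀ n, (starRingEnd ℂ) (α n) * inner ℂ (e n) h + (inner ℂ (e n) g : ℂ) * c = 0 := by
        intro n
        rw [← hcoef n h]
        exact hh (e n)
      by_cases hc0 : c = 0
      · apply eq_zero_of_inner_basis_zero e
        intro n
        have h1 := hstar n
        rw [hc0, mul_zero, add_zero] at h1
        have hαn : (starRingEnd ℂ) (α n) ≠ 0 := by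
          simpa using hα n
        exact (mul_eq_zero.mp h1).resolve_left hαn
      · exfalso
        -- T* is surjective, solve T* x = e 0
        have hadj : ContinuousLinearMap.adjoint T ∘L ContinuousLinearMap.adjoint S = 1 := by
          rw [← ContinuousLinearMap.adjoint_comp, hS]
          have h1 : (1 : H →L[ℂ] H) = ContinuousLinearMap.id ℂ H := rfl
          rw [h1, ContinuousLinearMap.adjoint_id]
        set x : H := ContinuousLinearMap.adjoint S (e 0) with hxdef
        have hx : ContinuousLinearMap.adjoint T x = e 0 := by
          have := congrArg (fun A : H →L[ℂ] H => A (e 0)) hadj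
          simpa using this
        set s : ℂ := inner ℂ f x with hs
        have heq : ∀ n, (starRingEnd ℂ) (α n) * inner ℂ (e n) x + (inner ℂ (e n) g : ℂ) * s
            = if n = 0 then 1 else 0 := by
          intro n
          have h1 : (inner ℂ (e n) (ContinuousLinearMap.adjoint T x) : ℂ) = inner ℂ (T (e n)) x :=
            ContinuousLinearMap.adjoint_inner_right T (e n) x
          rw [hx] at h1
          rw [← hcoef n x, ← h1]
          exact orthonormal_iff_ite.mp e.orthonormal n 0
        -- combine to express the coefficients of x
        have hxv : ∀ n, (inner ℂ (e n) (x - (s / c) • h) : ℂ)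
            = if n = 0 then ((starRingEnd ℂ) (α 0))⁻¹ else 0 := by
          intro n
          have h1 := heq n
          have h2 := hstar n
          have hαn : (starRingEnd ℂ) (α n) ≠ 0 := by simpa using hα n
          rw [inner_sub_right, inner_smul_right]
          by_cases hn : n = 0
          · subst hn
            simp only [if_pos] at h1 ⊢
            field_simp
            linear_combination c * h1 - s * h2
          · simp only [if_neg hn] at h1 ⊢
            have h5 : (inner ℂ (e n) x : ℂ) * c - s * inner ℂ (e n) h = 0 := by
              have h6 : (starRingEnd ℂ) (α n)
                  * ((inner ℂ (e n) x : ℂ) * c - s * inner ℂ (e n) h) = 0 := by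
                linear_combination c * h1 - s * h2
              exact (mul_eq_zero.mp h6).resolve_left hαn
            field_simp
            linear_combination h5
        have hxeq : x = (s / c) • h + ((starRingEnd ℂ) (α 0))⁻¹ • e 0 := by
          have hw : x - ((s / c) • h + ((starRingEnd ℂ) (α 0))⁻¹ • e 0) = 0 := by
            rw [← sub_sub]
            apply eq_zero_of_inner_basis_zero e
            intro n
            rw [inner_sub_right, hxv n, inner_smul_right]
            have h6 := orthonormal_iff_ite.mp e.orthonormal n 0
            rw [h6]
            by_cases hn : n = 0 <;> simp [hn]
          exact sub_eq_zero.mp hw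
        have hfin : ((starRingEnd ℂ) (α 0))⁻¹ * (inner ℂ f (e 0) : ℂ) = 0 := by
          have h6 : s = s + ((starRingEnd ℂ) (α 0))⁻¹ * inner ℂ f (e 0) := by
            conv_lhs => rw [hs, hxeq]
            rw [inner_add_right, inner_smul_right, inner_smul_right, ← hc,
              div_mul_cancel₀ s hc0]
          exact (left_eq_add.mp h6)
        have hne : ((starRingEnd ℂ) (α 0))⁻¹ * (inner ℂ f (e 0) : ℂ) ≠ 0 := by
          apply mul_ne_zero
          · exact inv_ne_zero (by simpa using hα 0)
          · intro hz
            apply hf 0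
            have h7 := congrArg (starRingEnd ℂ) hz
            rw [inner_conj_symm] at h7
            simpa using h7
        exact hne hfin
    -- T has closed range
    have hanti : AntilipschitzWith ‖S‖₊ T := by
      apply T.antilipschitz_of_bound
      intro x
      calc ‖x‖ = ‖S (T x)‖ := by rw [hST x]
        _ ≤ ‖S‖ * ‖T x‖ := S.le_opNorm _
    have hclosed : IsClosed (Set.range T) := hanti.isClosed_range T.uniformContinuous
    have hcl : IsClosed ((LinearMap.range (T : H →ₗ[ℂ] H) : Submodule ℂ H) : Set H) := by
      have hset : ((LinearMap.range (T : H →ₗ[ℂ] H) : Submodule ℂ H) : Set H) = Set.range T := by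
        ext y
        simp [LinearMap.mem_range, Set.mem_range]
      rw [hset]
      exact hclosed
    haveI : CompleteSpace (LinearMap.range (T : H →ₗ[ℂ] H) : Submodule ℂ H) := hcl.completeSpace_coe
    have hbot : (LinearMap.range (T : H →ₗ[ℂ] H) : Submodule ℂ H)ᗮ = ⊥ := by
      rw [Submodule.eq_bot_iff]
      intro h hh
      exact hperp h fun x =>
        (Submodule.mem_orthogonal _ h).mp hh (T x) (LinearMap.mem_range_self _ x)
    have htop : (LinearMap.range (T : H →ₗ[ℂ] H) : Submodule ℂ H) = ⊤ := by
      have h1 := Submodule.orthogonal_orthogonal (LinearMap.range (T : H →ₗ[ℂ] H) : Submodule ℂ H)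
      rw [hbot, Submodule.bot_orthogonal_eq_top] at h1
      exact h1.symm
    have hsurj : Function.Surjective T := LinearMap.range_eq_top.mp htop
    refine ⟨S, hS, ?_⟩
    ext y
    obtain ⟨x, hx⟩ := hsurj y
    simp only [comp_apply, ContinuousLinearMap.one_apply]
    rw [← hx, hST x]
  · rintro ⟨S, hS, _⟩
    exact ⟨S, hS⟩
end

section
/- Let H = ℓ²(ℕ, ℂ) with standard orthonormal basis (e_n)_{n≥0}, and let S be the unilateral right shift, S e_n = e_{n+1}. Let α, β ∈ ℂ with (α, β) ≠ (0, 0), and set f = α e₁ + (β − 1) e₂ and g = e₀. Then for the isometry V = S² one has c(V; f, g) = |α|² + |β|², and consequently T = S² + f⊗g is left-invertible; moreover T is analytic. -/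
open ContinuousLinearMap

open scoped ENNReal
set_option maxHeartbeats 1000000
set_option linter.unusedSectionVars false

namespace HardyAux

noncomputable abbrev E := lp (fun _ : ℕ => ℂ) 2

noncomputable abbrev e (n : ℕ) : E := lp.single 2 n (1 : ℂ)

lemma coord (x : E) (n : ℕ) : (inner ℂ (e n) x : ℂ) = x n := by
  rw [lp.inner_single_left]
  simp [RCLike.inner_apply]

lemma e_apply (n m : ℕ) : (e n) m = if m = n then (1:ℂ) else 0 := by
  simp [lp.single_apply, Pi.single_apply]

variable (S : E →L[ℂ] E) (hS : ∀ n : ℕ, S (lp.single 2 n (1 : ℂ)) = lp.single 2 (n + 1) (1 : ℂ))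

include hS

lemma adj_coord (x : E) (n : ℕ) : (adjoint S x) n = x (n + 1) := by
  rw [← coord (adjoint S x) n, adjoint_inner_right, hS, coord]

lemma sq_coord0 (x : E) : (S (S x)) 0 = 0 := by
  have h0 : adjoint S (e 0) = 0 := by
    apply lp.ext; funext m
    rw [adj_coord S hS, e_apply, lp.coeFn_zero]
    simp
  rw [← coord (S (S x)) 0, ← adjoint_inner_left, ← adjoint_inner_left, h0, map_zero,
    inner_zero_left]

lemma sq_coord1 (x : E) : (S (S x)) 1 = 0 := by
  have h1 : adjoint S (e 1) = e 0 := by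
    apply lp.ext; funext m
    rw [adj_coord S hS, e_apply, e_apply]
    simp
  have h0 : adjoint S (e 0) = 0 := by
    apply lp.ext; funext m
    rw [adj_coord S hS, e_apply, lp.coeFn_zero]
    simp
  rw [← coord (S (S x)) 1, ← adjoint_inner_left, ← adjoint_inner_left, h1, h0,
    inner_zero_left]

lemma sq_coord (x : E) (n : ℕ) : (S (S x)) (n + 2) = x n := by
  have h1 : ∀ k : ℕ, adjoint S (e (k + 1)) = e k := by
    intro k
    apply lp.ext; funext m
    rw [adj_coord S hS, e_apply, e_apply]
    simp
  rw [← coord (S (S x)) (n + 2), ← adjoint_inner_left, ← adjoint_inner_left,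
    h1, h1, coord]


variable (α β : ℂ) (f g : E)
  (hf : f = α • lp.single 2 1 (1 : ℂ) + (β - 1) • lp.single 2 2 (1 : ℂ))
  (hg : g = lp.single 2 0 (1 : ℂ))

omit hS in
include hf in
lemma f_coord (n : ℕ) :
    f n = if n = 1 then α else if n = 2 then β - 1 else 0 := by
  rw [hf, lp.coeFn_add, Pi.add_apply, lp.coeFn_smul, lp.coeFn_smul,
    Pi.smul_apply, Pi.smul_apply, e_apply, e_apply]
  rcases Nat.lt_or_ge n 3 with h | h
  · interval_cases n <;> simp
  · have h1 : n ≠ 1 := by omega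
    have h2 : n ≠ 2 := by omega
    simp [h1, h2]

omit hS in
include hg in
lemma T_coord (x : E) (n : ℕ) :
    ((S ^ 2 + rankOne f g) x) n = (S (S x)) n + x 0 * f n := by
  have : (S ^ 2 + rankOne f g) x = S (S x) + (x 0 : ℂ) • f := by
    rw [ContinuousLinearMap.add_apply, pow_two, ContinuousLinearMap.mul_apply]
    congr 1
    show (inner ℂ g x : ℂ) • f = (x 0 : ℂ) • f
    rw [hg, coord]
  rw [this, lp.coeFn_add, Pi.add_apply, lp.coeFn_smul, Pi.smul_apply, smul_eq_mul]

include hf hg in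
lemma T_coord0 (x : E) : ((S ^ 2 + rankOne f g) x) 0 = 0 := by
  rw [T_coord S f g hg, sq_coord0 S hS, f_coord α β f hf]; simp

include hf hg in
lemma T_coord1 (x : E) : ((S ^ 2 + rankOne f g) x) 1 = α * x 0 := by
  rw [T_coord S f g hg, sq_coord1 S hS, f_coord α β f hf]; simp [mul_comm]

include hf hg in
lemma T_coord2 (x : E) : ((S ^ 2 + rankOne f g) x) 2 = β * x 0 := by
  rw [T_coord S f g hg, sq_coord S hS, f_coord α β f hf]; simp; ring

include hf hg in
lemma T_coord3 (x : E) (n : ℕ) :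
    ((S ^ 2 + rankOne f g) x) (n + 3) = x (n + 1) := by
  have e1 : n + 3 = (n + 1) + 2 := by omega
  rw [T_coord S f g hg, e1, sq_coord S hS, f_coord α β f hf]
  simp


omit hS in
lemma rankOne_apply (u v x : E) : rankOne u v x = (inner ℂ v x : ℂ) • u := rfl

include hS hf hg in
lemma range_coord (k : ℕ) (x : E) :
    ∀ j, j < 2 * k + 1 → (((S ^ 2 + rankOne f g) ^ (k + 1)) x) j = 0 := by
  induction k generalizing x with
  | zero =>
    intro j hj
    interval_cases j
    rw [pow_one]
    exact T_coord0 S hS α β f g hf hg x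
  | succ k ih =>
    intro j hj
    have hp : ((S ^ 2 + rankOne f g) ^ (k + 1 + 1)) x
        = (S ^ 2 + rankOne f g) (((S ^ 2 + rankOne f g) ^ (k + 1)) x) := by
      rw [pow_succ']
      rfl
    set z := ((S ^ 2 + rankOne f g) ^ (k + 1)) x with hzdef
    have hz0 : z 0 = 0 := ih x 0 (by omega)
    rw [hp]
    match j, hj with
    | 0, _ => exact T_coord0 S hS α β f g hf hg z
    | 1, _ => rw [T_coord1 S hS α β f g hf hg z, hz0, mul_zero]
    | 2, _ => rw [T_coord2 S hS α β f g hf hg z, hz0, mul_zero]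
    | (m+3), hj =>
      rw [T_coord3 S hS α β f g hf hg z m]
      exact ih x (m+1) (by omega)

include hS hf hg in
lemma analytic :
    (⋂ k : ℕ, Set.range ⇑((S ^ 2 + rankOne f g) ^ k)) = {0} := by
  apply Set.eq_singleton_iff_unique_mem.mpr
  constructor
  · exact Set.mem_iInter.mpr fun k => ⟨0, map_zero _⟩
  · intro x hx
    apply lp.ext; funext j
    obtain ⟨y, hy⟩ := Set.mem_iInter.mp hx (j + 1)
    rw [lp.coeFn_zero, Pi.zero_apply, ← hy]
    exact range_coord S hS α β f g hf hg j y j (by omega)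

include hS hf hg in
lemma left_inv (hαβ : (α, β) ≠ (0, 0)) :
    ∃ L : E →L[ℂ] E, L ∘L (S ^ 2 + rankOne f g) = 1 := by
  have hcr : Complex.normSq α + Complex.normSq β ≠ 0 := by
    intro h
    have h1 : Complex.normSq α = 0 := by
      nlinarith [Complex.normSq_nonneg α, Complex.normSq_nonneg β]
    have h2 : Complex.normSq β = 0 := by
      nlinarith [Complex.normSq_nonneg α, Complex.normSq_nonneg β]
    exact hαβ (Prod.ext (Complex.normSq_eq_zero.mp h1) (Complex.normSq_eq_zero.mp h2))
  set c : ℂ := ((Complex.normSq α + Complex.normSq β : ℝ) : ℂ) with hcdef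
  have hc : c ≠ 0 := by
    rw [hcdef]
    exact_mod_cast hcr
  set Lop : E →L[ℂ] E := c⁻¹ • rankOne (e 0) (α • e 1 + β • e 2)
      + (adjoint S ∘L adjoint S) ∘L (1 - rankOne (e 1) (e 1) - rankOne (e 2) (e 2))
    with hLop
  refine ⟨Lop, ?_⟩
  ext x n
  rw [ContinuousLinearMap.comp_apply, ContinuousLinearMap.one_apply]
  set y := (S ^ 2 + rankOne f g) x with hydef
  have hy1 : y 1 = α * x 0 := T_coord1 S hS α β f g hf hg x
  have hy2 : y 2 = β * x 0 := T_coord2 S hS α β f g hf hg x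
  have hy3 : ∀ m : ℕ, y (m + 3) = x (m + 1) := fun m => T_coord3 S hS α β f g hf hg x m
  have hL : ∀ n : ℕ,
      (Lop y) n
      = c⁻¹ * ((starRingEnd ℂ α * y 1 + starRingEnd ℂ β * y 2) * (e 0) n)
        + (y (n + 2) - y 1 * (e 1) (n + 2) - y 2 * (e 2) (n + 2)) := by
    intro n
    rw [hLop, ContinuousLinearMap.add_apply, lp.coeFn_add, Pi.add_apply,
      ContinuousLinearMap.smul_apply, lp.coeFn_smul, Pi.smul_apply, smul_eq_mul,
      rankOne_apply, lp.coeFn_smul, Pi.smul_apply, smul_eq_mul]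
    have hu : (inner ℂ (α • e 1 + β • e 2) y : ℂ)
        = starRingEnd ℂ α * y 1 + starRingEnd ℂ β * y 2 := by
      rw [inner_add_left, inner_smul_left, inner_smul_left, coord, coord]
    rw [hu]
    congr 1
    rw [ContinuousLinearMap.comp_apply, ContinuousLinearMap.comp_apply,
      adj_coord S hS, adj_coord S hS,
      ContinuousLinearMap.sub_apply, ContinuousLinearMap.sub_apply,
      ContinuousLinearMap.one_apply, rankOne_apply, rankOne_apply, coord, coord,
      lp.coeFn_sub, Pi.sub_apply, lp.coeFn_sub, Pi.sub_apply,
      lp.coeFn_smul, Pi.smul_apply, lp.coeFn_smul, Pi.smul_apply,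
      smul_eq_mul, smul_eq_mul]
  rw [hL n]
  rcases n with _ | m
  · rw [hy1, hy2]
    have key : starRingEnd ℂ α * (α * x 0) + starRingEnd ℂ β * (β * x 0) = c * x 0 := by
      rw [hcdef]
      push_cast
      rw [Complex.normSq_eq_conj_mul_self, Complex.normSq_eq_conj_mul_self]
      ring
    rw [key, e_apply, e_apply, e_apply]
    norm_num
    field_simp
  · rw [show m + 1 + 2 = m + 3 from rfl, hy3, e_apply, e_apply, e_apply]
    have h1 : ¬ (m + 1 = 0) := by omega
    have h2 : ¬ (m + 3 = 1) := by omega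
    have h3 : ¬ (m + 3 = 2) := by omega
    simp [h1, h2, h3]

include hS hf hg in
lemma part1 :
    (‖f‖ ^ 2 - ‖adjoint (S ^ 2) f‖ ^ 2) * ‖g‖ ^ 2
        + ‖(1 : ℂ) + (inner ℂ g (adjoint (S ^ 2) f) : ℂ)‖ ^ 2
        = ‖α‖ ^ 2 + ‖β‖ ^ 2 := by
  have hadj : adjoint (S ^ 2) f = adjoint S (adjoint S f) := by
    rw [pow_two, show S * S = S ∘L S from rfl, ContinuousLinearMap.adjoint_comp]
    rfl
  have hnorme : ∀ n : ℕ, ‖e n‖ = 1 := by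
    intro n
    have h2 : (0:ℝ) < (2 : ℝ≥0∞).toReal := by norm_num
    have := lp.norm_single (p := 2) (E := fun _ : ℕ => ℂ) (by norm_num) n (1:ℂ)
    simpa using this
  have hw : adjoint (S ^ 2) f = (β - 1) • e 0 := by
    apply lp.ext; funext m
    rw [hadj, adj_coord S hS, adj_coord S hS, f_coord α β f hf,
      lp.coeFn_smul, Pi.smul_apply, e_apply, smul_eq_mul]
    rcases m with _ | m
    · norm_num
    · have h1 : ¬ (m + 1 + 1 + 1 = 1) := by omega
      have h2 : ¬ (m + 1 + 1 + 1 = 2) := by omega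
      have h3 : ¬ (m + 1 = 0) := by omega
      simp [h1, h2, h3]
  have hng : ‖g‖ = 1 := by rw [hg]; exact hnorme 0
  have hnw : ‖adjoint (S ^ 2) f‖ = ‖β - 1‖ := by
    rw [hw, norm_smul, hnorme 0, mul_one]
  have hinner : (inner ℂ g (adjoint (S ^ 2) f) : ℂ) = β - 1 := by
    rw [hg, coord, hw, lp.coeFn_smul, Pi.smul_apply, e_apply]
    simp
  have horth : (inner ℂ (α • e 1) ((β - 1) • e 2) : ℂ) = 0 := by
    rw [inner_smul_left, inner_smul_right, coord, e_apply]
    simp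
  have hnf : ‖f‖ ^ 2 = ‖α‖ ^ 2 + ‖β - 1‖ ^ 2 := by
    rw [hf, norm_add_sq (𝕜 := ℂ), horth, norm_smul, norm_smul, hnorme 1, hnorme 2]
    simp
  rw [hng, hnw, hinner, hnf, show (1 : ℂ) + (β - 1) = β by ring]
  ring

end HardyAux

/-- **Example.** On `H = ℓ²(ℕ, ℂ)` with standard basis `e_n = single n 1`, let
`S` be the unilateral right shift (`S e_n = e_{n+1}`), `(α, β) ≠ (0,0)`,
`f = α e₁ + (β − 1) e₂`, `g = e₀`, and `V = S²`. Then
`c(V; f, g) = |α|² + |β|²`, so `T = S² + f ⊗ g` is left-invertible; moreover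
`T` is analytic. -/
theorem hardy_square_shift_example
    (S : lp (fun _ : ℕ => ℂ) 2 →L[ℂ] lp (fun _ : ℕ => ℂ) 2)
    (hS : ∀ n : ℕ, S (lp.single 2 n (1 : ℂ)) = lp.single 2 (n + 1) (1 : ℂ))
    (hiso : (adjoint S) ∘L S = 1)
    (α β : ℂ) (hαβ : (α, β) ≠ (0, 0))
    (f g : lp (fun _ : ℕ => ℂ) 2)
    (hf : f = α • lp.single 2 1 (1 : ℂ) + (β - 1) • lp.single 2 2 (1 : ℂ))
    (hg : g = lp.single 2 0 (1 : ℂ)) :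
    ((‖f‖ ^ 2 - ‖adjoint (S ^ 2) f‖ ^ 2) * ‖g‖ ^ 2
        + ‖(1 : ℂ) + (inner ℂ g (adjoint (S ^ 2) f) : ℂ)‖ ^ 2
        = ‖α‖ ^ 2 + ‖β‖ ^ 2)
      ∧ (∃ L : lp (fun _ : ℕ => ℂ) 2 →L[ℂ] lp (fun _ : ℕ => ℂ) 2,
          L ∘L (S ^ 2 + rankOne f g) = 1)
      ∧ (⋂ k : ℕ, Set.range ⇑((S ^ 2 + rankOne f g) ^ k)) = {0} := by
  exact ⟨HardyAux.part1 S hS α β f g hf hg,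
   HardyAux.left_inv S hS α β f g hf hg hαβ,
   HardyAux.analytic S hS α β f g hf hg⟩
end
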